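/- Define h_T on decorated trees recursively: on the one-leaf tree, h_T is the identity; if T = Δ_T(T', i) (type II), h_T(T) is h_T(T') with a free leaf attached as rightmost child of the i-th node on its rightmost path; if T is a free leaf attached as leftmost child of the root of T' (type III), h_T(T) is h_T(T') with a free leaf attached below its rightmost leaf; if T = ⊕_T(T1, i, T2) (type IV), h_T(T) is obtained from h_T(T2) by replacing its rightmost leaf with the tree h_T(Δ_T(T1, i)) whose leaf labels (except the rightmost one) are increased by rpath(h_T(T2)). Then h_T is an involution on decorated trees with n edges for every n ≥ 1. -/

import Mathlib

/-- Rooted plane trees with integer labels on the leaves. -/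
inductive DTree where
  | leaf : ℤ → DTree
  | node : List DTree → DTree

mutual
/-- The list of leaf labels of a tree, in left-to-right (prefix traversal) order. -/
def leafLabels : DTree → List ℤ
  | .leaf l => [l]
  | .node ts => leafLabelsList ts
def leafLabelsList : List DTree → List ℤ
  | [] => []
  | t :: ts => leafLabels t ++ leafLabelsList ts
end

/-- The three conditions of decorated trees, for a subtree whose root is at depth `d`:
leaf labels are at least -1 and strictly less than the depth of their parent;
every internal node of positive depth `d` has a descendant leaf labeled at most `d - 2`;
and in any direct subtree of an internal node of depth `d`, a leaf labeled `d` is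
preceded in traversal order only by leaves labeled at least `d`. -/
inductive DecoAt : DTree → ℕ → Prop where
  | leaf {l : ℤ} {d : ℕ} (h1 : -1 ≤ l) (h2 : l < (d : ℤ) - 1) : DecoAt (.leaf l) d
  | node {ts : List DTree} {d : ℕ} (hne : ts ≠ [])
      (h2 : 0 < d → ∃ x ∈ leafLabelsList ts, x ≤ (d : ℤ) - 2)
      (h3 : ∀ t' ∈ ts, ∀ a b, leafLabels t' = a ++ (d : ℤ) :: b → ∀ x ∈ a, (d : ℤ) ≤ x)
      (h4 : ∀ t' ∈ ts, DecoAt t' (d + 1)) : DecoAt (.node ts) d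

/-- A decorated tree: the root is at depth 0. -/
def IsDeco (T : DTree) : Prop := DecoAt T 0

/-- The number of free leaves (leaves labeled -1). -/
def fl (T : DTree) : ℕ := (leafLabels T).count (-1)

mutual
/-- Increment leaf labels, where the counter `m` is the number of free leaves (from
the left) that still must be incremented; once it reaches 0, remaining free leaves
are left untouched. Returns the new tree and the remaining counter. -/
def incUpTo : DTree → ℕ → DTree × ℕ
  | .leaf l, m =>
      if l = -1 then (if 0 < m then (.leaf 0, m - 1) else (.leaf (-1), m))
      else (.leaf (l + 1), m)
  | .node ts, m =>
      let p := incList ts m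
      (.node p.1, p.2)
def incList : List DTree → ℕ → List DTree × ℕ
  | [], m => ([], m)
  | t :: ts, m =>
      let p := incUpTo t m
      let q := incList ts p.2
      (p.1 :: q.1, q.2)
end

/-- Δ_T(T,i): attach `T` under a new root vertex and add 1 to every leaf label,
except for the last `i` free leaves (in traversal order). -/
def deltaT (T : DTree) (i : ℕ) : DTree := .node [(incUpTo T (fl T - i)).1]

mutual
/-- Subtract 1 from every non-free leaf label. -/
def decLeaves : DTree → DTree
  | .leaf l => if l = -1 then .leaf (-1) else .leaf (l - 1)
  | .node ts => .node (decList ts)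
def decList : List DTree → List DTree
  | [] => []
  | t :: ts => decLeaves t :: decList ts
end

/-- Π_T: remove the root (which has a unique child) and subtract 1 from every
non-free leaf label. -/
def piT : DTree → DTree
  | .node [t] => decLeaves t
  | t => t

/-- ⊕_T(T1,i,T2): identify the roots of Δ_T(T1,i) and T2, with the subtrees of
Δ_T(T1,i) placed to the left. -/
def oplusT (T1 : DTree) (i : ℕ) (T2 : DTree) : DTree :=
  match deltaT T1 i, T2 with
  | .node a, .node b => .node (a ++ b)
  | _, _ => deltaT T1 i

mutual
/-- Attach a free leaf as rightmost child of the `i`-th node on the rightmost path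
(the root being the first node of the rightmost path). -/
def attachR : DTree → ℕ → DTree
  | .leaf _, _ => .leaf (-1)
  | .node ts, i =>
      if i ≤ 1 then .node (ts ++ [.leaf (-1)])
      else .node (attachRLast ts (i - 1))
def attachRLast : List DTree → ℕ → List DTree
  | [], _ => []
  | [t], i => [attachR t i]
  | t :: ts, i => t :: attachRLast ts i
end

mutual
/-- Attach a free leaf below the rightmost leaf, which becomes an internal node. -/
def growR : DTree → DTree
  | .leaf _ => .node [.leaf (-1)]
  | .node ts => .node (growRLast ts)
def growRLast : List DTree → List DTree
  | [] => []
  | [t] => [growR t]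
  | t :: ts => t :: growRLast ts
end

mutual
/-- The number of edges on the rightmost path (from the root to the rightmost leaf). -/
def rpath : DTree → ℕ
  | .leaf _ => 0
  | .node ts => rpathLast ts
def rpathLast : List DTree → ℕ
  | [] => 0
  | [t] => rpath t + 1
  | _ :: ts => rpathLast ts
end

mutual
/-- Add `r` to every leaf label. -/
def addAll (r : ℤ) : DTree → DTree
  | .leaf l => .leaf (l + r)
  | .node ts => .node (addAllList r ts)
def addAllList (r : ℤ) : List DTree → List DTree
  | [] => []
  | t :: ts => addAll r t :: addAllList r ts
end

mutual
/-- Add `r` to every leaf label except the rightmost leaf. -/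
def addExceptLast (r : ℤ) : DTree → DTree
  | .leaf l => .leaf l
  | .node ts => .node (addExceptLastList r ts)
def addExceptLastList (r : ℤ) : List DTree → List DTree
  | [] => []
  | [t] => [addExceptLast r t]
  | t :: ts => addAll r t :: addExceptLastList r ts
end

mutual
/-- Replace the rightmost leaf by the tree `repl`. -/
def replaceR (repl : DTree) : DTree → DTree
  | .leaf _ => repl
  | .node ts => .node (replaceRList repl ts)
def replaceRList (repl : DTree) : List DTree → List DTree
  | [] => []
  | [t] => [replaceR repl t]
  | t :: ts => t :: replaceRList repl ts
end

/-- The involution h_T on decorated trees, as a relation, following its recursive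
definition on the four structural types of decorated trees. -/
inductive HT : DTree → DTree → Prop where
  /-- Type I: the one-leaf tree is fixed. -/
  | base : HT (.node [.leaf (-1)]) (.node [.leaf (-1)])
  /-- Type II: `T = Δ_T(T', i)`; attach a free leaf as rightmost child of the `i`-th
  node on the rightmost path of `h_T(T')`. -/
  | typeII {T' U' : DTree} {i : ℕ} (h1 : 1 ≤ i) (h2 : i ≤ fl T') (h : HT T' U') :
      HT (deltaT T' i) (attachR U' i)
  /-- Type III: `T` is a free leaf attached as leftmost child of the root of `T'`;
  attach a free leaf below the rightmost leaf of `h_T(T')`. -/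
  | typeIII {ts : List DTree} {U' : DTree} (hne : ts ≠ []) (h : HT (.node ts) U') :
      HT (.node (.leaf (-1) :: ts)) (growR U')
  /-- Type IV: `T = ⊕_T(T1, i, T2)`; replace the rightmost leaf of `h_T(T2)` by
  `h_T(Δ_T(T1, i))` with all leaf labels except the rightmost one increased by
  `rpath (h_T(T2))`. -/
  | typeIV {T1 T2 U1 U2 : DTree} {i : ℕ} (h1 : 1 ≤ i) (h2 : i ≤ fl T1)
      (hA : HT (deltaT T1 i) U1) (hB : HT T2 U2) :
      HT (oplusT T1 i T2) (replaceR (addExceptLast (rpath U2 : ℤ) U1) U2)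

mutual
/-- The number of vertices of a tree. -/
def nverts : DTree → ℕ
  | .leaf _ => 1
  | .node ts => 1 + nvertsList ts
def nvertsList : List DTree → ℕ
  | [] => 0
  | t :: ts => nverts t + nvertsList ts
end

/-- The number of edges of a rooted tree. -/
def nedges (T : DTree) : ℕ := nverts T - 1

/-! ### Section 1: basic list lemmas -/

def kids : DTree → List DTree
  | .leaf _ => []
  | .node ts => ts

@[simp] lemma kids_node (ts : List DTree) : kids (.node ts) = ts := rfl

def flL (ts : List DTree) : ℕ := (leafLabelsList ts).count (-1)

lemma fl_node (ts : List DTree) : fl (.node ts) = flL ts := rfl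

lemma labelsL_append (a b : List DTree) :
    leafLabelsList (a ++ b) = leafLabelsList a ++ leafLabelsList b := by
  induction a with
  | nil => simp [leafLabelsList]
  | cons t a ih => simp [leafLabelsList, ih]

lemma snoc_inj {α : Type*} {a b : List α} {x y : α} (h : a ++ [x] = b ++ [y]) :
    a = b ∧ x = y := by
  have := List.append_inj' h rfl
  simpa using this

lemma snoc_of_ne_nil {α : Type*} (l : List α) (h : l ≠ []) : ∃ a x, l = a ++ [x] :=
  ⟨l.dropLast, l.getLast h, (List.dropLast_append_getLast h).symm⟩

/-- decompose `L ++ [y] = a ++ x :: b`. -/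
lemma concat_eq_append_cons {α : Type*} {L a b : List α} {x y : α}
    (h : L ++ [y] = a ++ x :: b) :
    (b = [] ∧ a = L ∧ x = y) ∨ ∃ b', b = b' ++ [y] ∧ L = a ++ x :: b' := by
  induction a generalizing L with
  | nil =>
    simp only [List.nil_append] at h ⊢
    cases L with
    | nil => simp at h; tauto
    | cons z L' =>
      simp only [List.cons_append, List.cons.injEq] at h
      exact Or.inr ⟨L', h.2.symm, by rw [h.1]⟩
  | cons c a' ih =>
    cases L with
    | nil =>
      simp only [List.nil_append, List.cons_append, List.cons.injEq] at h
      exact absurd h.2.symm (by simp)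
    | cons z L' =>
      simp only [List.cons_append, List.cons.injEq] at h
      obtain ⟨rfl, h2⟩ := h
      rcases ih h2 with ⟨rfl, rfl, rfl⟩ | ⟨b', rfl, rfl⟩
      · exact Or.inl ⟨rfl, rfl, rfl⟩
      · exact Or.inr ⟨b', rfl, rfl⟩

/-- split `A ++ B = L ++ [x]` when `B ≠ []`. -/
lemma snoc_split {α : Type*} {A B L : List α} {x : α} (h : A ++ B = L ++ [x]) (hB : B ≠ []) :
    ∃ B', B = B' ++ [x] ∧ L = A ++ B' := by
  obtain ⟨B', y, rfl⟩ := snoc_of_ne_nil B hB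
  rw [← List.append_assoc] at h
  obtain ⟨h1, rfl⟩ := snoc_inj h
  exact ⟨B', rfl, h1.symm⟩

/-! concat lemmas for the \"Last\" operations -/

lemma cons_append_ne_nil {α : Type*} (ss : List α) (u : α) : ∃ a as, ss ++ [u] = a :: as := by
  cases ss <;> simp

lemma attachRLast_concat (ss : List DTree) (u : DTree) (j : ℕ) :
    attachRLast (ss ++ [u]) j = ss ++ [attachR u j] := by
  induction ss with
  | nil => simp [attachRLast]
  | cons s ss ih =>
    obtain ⟨a, as, hh⟩ := cons_append_ne_nil ss u
    rw [List.cons_append, hh, show attachRLast (s :: a :: as) j = s :: attachRLast (a :: as) j from rfl, ← hh, ih]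
    simp

lemma growRLast_concat (ss : List DTree) (u : DTree) :
    growRLast (ss ++ [u]) = ss ++ [growR u] := by
  induction ss with
  | nil => simp [growRLast]
  | cons s ss ih =>
    obtain ⟨a, as, hh⟩ := cons_append_ne_nil ss u
    rw [List.cons_append, hh, show growRLast (s :: a :: as) = s :: growRLast (a :: as) from rfl, ← hh, ih]
    simp

lemma replaceRList_concat (X : DTree) (ss : List DTree) (u : DTree) :
    replaceRList X (ss ++ [u]) = ss ++ [replaceR X u] := by
  induction ss with
  | nil => simp [replaceRList]
  | cons s ss ih =>
    obtain ⟨a, as, hh⟩ := cons_append_ne_nil ss u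
    rw [List.cons_append, hh, show replaceRList X (s :: a :: as) = s :: replaceRList X (a :: as) from rfl, ← hh, ih]
    simp

lemma addExceptLastList_concat (r : ℤ) (ss : List DTree) (u : DTree) :
    addExceptLastList r (ss ++ [u]) = addAllList r ss ++ [addExceptLast r u] := by
  induction ss with
  | nil => simp [addExceptLastList, addAllList]
  | cons s ss ih =>
    obtain ⟨a, as, hh⟩ := cons_append_ne_nil ss u
    rw [List.cons_append, hh, show addExceptLastList r (s :: a :: as) = addAll r s :: addExceptLastList r (a :: as) from rfl, ← hh, ih]
    simp [addAllList]

lemma rpathLast_concat (ss : List DTree) (u : DTree) :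
    rpathLast (ss ++ [u]) = rpath u + 1 := by
  induction ss with
  | nil => simp [rpathLast]
  | cons s ss ih =>
    obtain ⟨a, as, hh⟩ := cons_append_ne_nil ss u
    rw [List.cons_append, hh, show rpathLast (s :: a :: as) = rpathLast (a :: as) from rfl, ← hh, ih]

lemma rpathLast_cons (t : DTree) (ts : List DTree) (h : ts ≠ []) :
    rpathLast (t :: ts) = rpathLast ts := by
  cases ts with
  | nil => simp at h
  | cons a as => simp [rpathLast]

lemma rpath_pos (ts : List DTree) (h : ts ≠ []) : 1 ≤ rpath (.node ts) := by
  obtain ⟨ss, u, rfl⟩ := snoc_of_ne_nil ts h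
  simp [rpath, rpathLast_concat]

lemma attachRLast_ne_nil (ts : List DTree) (j : ℕ) (h : ts ≠ []) : attachRLast ts j ≠ [] := by
  obtain ⟨ss, u, rfl⟩ := snoc_of_ne_nil ts h
  simp [attachRLast_concat]

lemma growRLast_ne_nil (ts : List DTree) (h : ts ≠ []) : growRLast ts ≠ [] := by
  obtain ⟨ss, u, rfl⟩ := snoc_of_ne_nil ts h
  simp [growRLast_concat]

lemma replaceRList_ne_nil (X : DTree) (ts : List DTree) (h : ts ≠ []) : replaceRList X ts ≠ [] := by
  obtain ⟨ss, u, rfl⟩ := snoc_of_ne_nil ts h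
  simp [replaceRList_concat]

lemma nvertsL_append (a b : List DTree) :
    nvertsList (a ++ b) = nvertsList a + nvertsList b := by
  induction a with
  | nil => simp [nvertsList]
  | cons t a ih => simp [nvertsList, ih]; ring

lemma incList_append (a b : List DTree) (m : ℕ) :
    incList (a ++ b) m = ((incList a m).1 ++ (incList b (incList a m).2).1,
      (incList b (incList a m).2).2) := by
  induction a generalizing m with
  | nil => simp [incList]
  | cons t a ih => simp [incList, ih]

/-! ### Section 2: incUpTo / decLeaves / addAll lemmas -/

set_option linter.unnecessarySeqFocus false

lemma incList_cons (t : DTree) (ts : List DTree) (m : ℕ) :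
    incList (t :: ts) m = ((incUpTo t m).1 :: (incList ts (incUpTo t m).2).1,
      (incList ts (incUpTo t m).2).2) := rfl

lemma labelsL_cons (t : DTree) (ts : List DTree) :
    leafLabelsList (t :: ts) = leafLabels t ++ leafLabelsList ts := rfl

mutual
theorem inc_snd : ∀ (t : DTree) (m : ℕ), (incUpTo t m).2 = m - fl t
  | .leaf l, m => by
    by_cases h : l = -1 <;> by_cases h2 : 0 < m <;>
      simp [incUpTo, fl, leafLabels, h, h2, List.count_singleton] <;> omega
  | .node ts, m => by
    simp only [incUpTo, fl_node]
    exact incL_snd ts m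
theorem incL_snd : ∀ (ts : List DTree) (m : ℕ), (incList ts m).2 = m - flL ts
  | [], m => by simp [incList, flL, leafLabelsList]
  | t :: ts, m => by
    simp only [incList, incL_snd ts, inc_snd t, flL, leafLabelsList, List.count_append]
    have : fl t = (leafLabels t).count (-1) := rfl
    rw [this]; omega
end

mutual
theorem rpath_inc : ∀ (t : DTree) (m : ℕ), rpath ((incUpTo t m).1) = rpath t
  | .leaf l, m => by
    by_cases h : l = -1 <;> by_cases h2 : 0 < m <;> simp [incUpTo, rpath, h, h2]
  | .node ts, m => by
    simp only [incUpTo, rpath]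
    exact rpathL_inc ts m
theorem rpathL_inc : ∀ (ts : List DTree) (m : ℕ), rpathLast ((incList ts m).1) = rpathLast ts
  | [], m => by simp [incList, rpathLast]
  | [t], m => by simp [incList, rpathLast, rpath_inc t]
  | t :: t' :: ts, m => by
    have e3 : (incList (t :: t' :: ts) m).1
        = (incUpTo t m).1 :: (incList (t' :: ts) (incUpTo t m).2).1 := rfl
    have e4 : (incList (t' :: ts) (incUpTo t m).2).1
        = (incUpTo t' (incUpTo t m).2).1 :: (incList ts (incUpTo t' (incUpTo t m).2).2).1 := rfl
    rw [e3, rpathLast_cons _ _ (by rw [e4]; simp), rpathLast_cons _ _ (by simp)]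
    exact rpathL_inc (t' :: ts) _
end

mutual
theorem nverts_inc : ∀ (t : DTree) (m : ℕ), nverts ((incUpTo t m).1) = nverts t
  | .leaf l, m => by
    by_cases h : l = -1 <;> by_cases h2 : 0 < m <;> simp [incUpTo, nverts, h, h2]
  | .node ts, m => by
    simp only [incUpTo, nverts]
    rw [nvertsL_inc ts m]
theorem nvertsL_inc : ∀ (ts : List DTree) (m : ℕ), nvertsList ((incList ts m).1) = nvertsList ts
  | [], m => by simp [incList, nvertsList]
  | t :: ts, m => by
    simp only [incList, nvertsList, nverts_inc t, nvertsL_inc ts]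
end

mutual
theorem fl_inc : ∀ (t : DTree) (m : ℕ), (∀ x ∈ leafLabels t, -1 ≤ x) →
    fl ((incUpTo t m).1) = fl t - m
  | .leaf l, m => fun hx => by
    have hl : -1 ≤ l := hx l (by simp [leafLabels])
    by_cases h : l = -1
    · subst h
      by_cases h2 : 0 < m <;> simp [incUpTo, fl, leafLabels, h2] <;> omega
    · have h3 : l + 1 ≠ -1 := by omega
      have c1 : ([l + 1] : List ℤ).count (-1) = 0 := by
        rw [List.count_eq_zero]; simp; omega
      have c2 : ([l] : List ℤ).count (-1) = 0 := by
        rw [List.count_eq_zero]; simp; omega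
      simp [incUpTo, fl, leafLabels, h, c1, c2]
  | .node ts, m => fun hx => by
    simp only [incUpTo, fl_node]
    exact flL_inc ts m hx
theorem flL_inc : ∀ (ts : List DTree) (m : ℕ), (∀ x ∈ leafLabelsList ts, -1 ≤ x) →
    flL ((incList ts m).1) = flL ts - m
  | [], m => fun _ => by simp [incList, flL, leafLabelsList]
  | t :: ts, m => fun hx => by
    have hxt : ∀ x ∈ leafLabels t, -1 ≤ x := fun x hm =>
      hx x (by simp [labelsL_cons, hm])
    have hxts : ∀ x ∈ leafLabelsList ts, -1 ≤ x := fun x hm =>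
      hx x (by simp [labelsL_cons, hm])
    have h1 := fl_inc t m hxt
    have h2 := flL_inc ts (incUpTo t m).2 hxts
    have h3 := inc_snd t m
    rw [incList_cons]
    simp only [flL, labelsL_cons, List.count_append]
    simp only [flL] at h2
    have e1 : fl t = (leafLabels t).count (-1) := rfl
    have e2 : fl ((incUpTo t m).1) = (leafLabels ((incUpTo t m).1)).count (-1) := rfl
    rw [e1] at h1 h3
    rw [e2] at h1
    omega
end

mutual
theorem labels_inc_ge : ∀ (t : DTree) (m : ℕ), (∀ x ∈ leafLabels t, -1 ≤ x) →
    ∀ x ∈ leafLabels ((incUpTo t m).1), -1 ≤ x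
  | .leaf l, m => fun hx => by
    have hl : -1 ≤ l := hx l (by simp [leafLabels])
    by_cases h : l = -1 <;> by_cases h2 : 0 < m <;>
      (intro x hxm; simp [incUpTo, leafLabels, h, h2] at hxm; omega)
  | .node ts, m => fun hx => by
    simp only [incUpTo, leafLabels]
    exact labelsL_inc_ge ts m hx
theorem labelsL_inc_ge : ∀ (ts : List DTree) (m : ℕ), (∀ x ∈ leafLabelsList ts, -1 ≤ x) →
    ∀ x ∈ leafLabelsList (incList ts m).1, -1 ≤ x
  | [], m => fun hx => by simp [incList, leafLabelsList]
  | t :: ts, m => fun hx => by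
    rw [incList_cons]
    intro x hxm
    rw [labelsL_cons, List.mem_append] at hxm
    rcases hxm with h | h
    · exact labels_inc_ge t m (fun y hy => hx y (by simp [labelsL_cons, hy])) x h
    · exact labelsL_inc_ge ts _ (fun y hy => hx y (by simp [labelsL_cons, hy])) x h
end

mutual
theorem dec_inc : ∀ (t : DTree) (m : ℕ), (∀ x ∈ leafLabels t, -1 ≤ x) →
    decLeaves ((incUpTo t m).1) = t
  | .leaf l, m => fun hx => by
    have hl : -1 ≤ l := hx l (by simp [leafLabels])
    by_cases h : l = -1
    · subst h
      by_cases h2 : 0 < m <;> simp [incUpTo, decLeaves, h2]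
    · have h3 : l + 1 ≠ -1 := by omega
      simp [incUpTo, decLeaves, h, h3]
  | .node ts, m => fun hx => by
    simp only [incUpTo, decLeaves]
    rw [decL_incL ts m hx]
theorem decL_incL : ∀ (ts : List DTree) (m : ℕ), (∀ x ∈ leafLabelsList ts, -1 ≤ x) →
    decList ((incList ts m).1) = ts
  | [], m => fun _ => by simp [incList, decList]
  | t :: ts, m => fun hx => by
    rw [incList_cons]
    show decLeaves ((incUpTo t m).1) :: decList (incList ts (incUpTo t m).2).1 = t :: ts
    rw [dec_inc t m (fun y hy => hx y (by simp [labelsL_cons, hy])),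
        decL_incL ts _ (fun y hy => hx y (by simp [labelsL_cons, hy]))]
end

def dec1 (l : ℤ) : ℤ := if l = -1 then -1 else l - 1

mutual
theorem labels_dec : ∀ (t : DTree), leafLabels (decLeaves t) = (leafLabels t).map dec1
  | .leaf l => by by_cases h : l = -1 <;> simp [decLeaves, leafLabels, dec1, h]
  | .node ts => by
    simp only [decLeaves, leafLabels]
    exact labels_decL ts
theorem labels_decL : ∀ (ts : List DTree),
    leafLabelsList (decList ts) = (leafLabelsList ts).map dec1
  | [] => by simp [decList, leafLabelsList]
  | t :: ts => by
    simp [decList, labelsL_cons, labels_dec t, labels_decL ts]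
end

mutual
theorem labels_addAll : ∀ (r : ℤ) (t : DTree),
    leafLabels (addAll r t) = (leafLabels t).map (· + r)
  | r, .leaf l => by simp [addAll, leafLabels]
  | r, .node ts => by
    simp only [addAll, leafLabels]
    exact labelsL_addAll r ts
theorem labelsL_addAll : ∀ (r : ℤ) (ts : List DTree),
    leafLabelsList (addAllList r ts) = (leafLabelsList ts).map (· + r)
  | r, [] => by simp [addAllList, leafLabelsList]
  | r, t :: ts => by
    simp [addAllList, labelsL_cons, labels_addAll r t, labelsL_addAll r ts]
end

mutual
theorem nverts_addAll : ∀ (r : ℤ) (t : DTree), nverts (addAll r t) = nverts t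
  | r, .leaf l => by simp [addAll, nverts]
  | r, .node ts => by simp only [addAll, nverts]; rw [nvertsL_addAll r ts]
theorem nvertsL_addAll : ∀ (r : ℤ) (ts : List DTree), nvertsList (addAllList r ts) = nvertsList ts
  | r, [] => by simp [addAllList, nvertsList]
  | r, t :: ts => by simp [addAllList, nvertsList, nverts_addAll r t, nvertsL_addAll r ts]
end

/-! ### Section 3: attachR lemmas -/

lemma sizeOf_last_lt (ss : List DTree) (u : DTree) :
    sizeOf u < sizeOf (DTree.node (ss ++ [u])) := by
  have : sizeOf u < sizeOf (ss ++ [u]) := List.sizeOf_lt_of_mem (by simp)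
  simp only [DTree.node.sizeOf_spec]; omega

lemma rpath_node_ne_nil {t : DTree} {i : ℕ} (h1 : 1 ≤ i) (h2 : i ≤ rpath t) :
    ∃ ss u, t = DTree.node (ss ++ [u]) := by
  match t with
  | .leaf l => simp [rpath] at h2; omega
  | .node ts =>
    have hne : ts ≠ [] := by rintro rfl; simp [rpath, rpathLast] at h2; omega
    obtain ⟨ss, u, rfl⟩ := snoc_of_ne_nil ts hne
    exact ⟨ss, u, rfl⟩

lemma rpath_concat (ss : List DTree) (u : DTree) :
    rpath (.node (ss ++ [u])) = rpath u + 1 := by simp [rpath, rpathLast_concat]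

lemma attachR_one (ts : List DTree) :
    attachR (.node ts) 1 = .node (ts ++ [.leaf (-1)]) := by simp [attachR]

lemma attachR_ge2 (ts : List DTree) (i : ℕ) (hi : 2 ≤ i) :
    attachR (.node ts) i = .node (attachRLast ts (i-1)) := by
  simp [attachR, show ¬ i ≤ 1 by omega]

theorem labels_attachR : ∀ (t : DTree) (i : ℕ), 1 ≤ i → i ≤ rpath t →
    leafLabels (attachR t i) = leafLabels t ++ [-1]
  | .leaf _, i => fun h1 h2 => by simp [rpath] at h2; omega
  | .node ts, i => fun h1 h2 => by
    have hne : ts ≠ [] := by rintro rfl; simp [rpath, rpathLast] at h2; omega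
    obtain ⟨ss, u, rfl⟩ := snoc_of_ne_nil ts hne
    by_cases hi : i ≤ 1
    · rw [show i = 1 by omega, attachR_one]
      simp [leafLabels, labelsL_append, leafLabelsList]
    · rw [attachR_ge2 _ _ (by omega), attachRLast_concat]
      rw [rpath_concat] at h2
      have h3 := labels_attachR u (i-1) (by omega) (by omega)
      simp [leafLabels, labelsL_append, leafLabelsList, h3]
termination_by t i => sizeOf t
decreasing_by subst_vars; exact sizeOf_last_lt ss u

theorem rpath_attachR : ∀ (t : DTree) (i : ℕ), 1 ≤ i → i ≤ rpath t →
    rpath (attachR t i) = i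
  | .leaf _, i => fun h1 h2 => by simp [rpath] at h2; omega
  | .node ts, i => fun h1 h2 => by
    have hne : ts ≠ [] := by rintro rfl; simp [rpath, rpathLast] at h2; omega
    obtain ⟨ss, u, rfl⟩ := snoc_of_ne_nil ts hne
    by_cases hi : i ≤ 1
    · rw [show i = 1 by omega, attachR_one]
      rw [show (ss ++ [u]) ++ [DTree.leaf (-1)] = ss ++ ([u] ++ [DTree.leaf (-1)]) from by simp,
          show ss ++ ([u] ++ [DTree.leaf (-1)]) = (ss ++ [u]) ++ [DTree.leaf (-1)] from by simp,
          rpath_concat]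
      simp [rpath]
    · rw [attachR_ge2 _ _ (by omega), attachRLast_concat, rpath_concat]
      rw [rpath_concat] at h2
      have h3 := rpath_attachR u (i-1) (by omega) (by omega)
      omega
termination_by t i => sizeOf t
decreasing_by subst_vars; exact sizeOf_last_lt ss u

set_option linter.unusedVariables false

lemma sizeOf_mem_lt {u : DTree} {ts : List DTree} (h : u ∈ ts) :
    sizeOf u < sizeOf (DTree.node ts) := by
  have := List.sizeOf_lt_of_mem h
  simp only [DTree.node.sizeOf_spec]; omega

lemma flL_concat (ss : List DTree) (u : DTree) : flL (ss ++ [u]) = flL ss + fl u := by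
  simp [flL, labelsL_append, List.count_append, leafLabelsList, fl]

lemma fl_concat_node (ss : List DTree) (u : DTree) :
    fl (.node (ss ++ [u])) = flL ss + fl u := by
  rw [fl_node, flL_concat]

theorem nverts_attachR : ∀ (t : DTree) (i : ℕ), 1 ≤ i → i ≤ rpath t →
    nverts (attachR t i) = nverts t + 1
  | .leaf _, i => fun h1 h2 => by simp [rpath] at h2; omega
  | .node ts, i => fun h1 h2 => by
    have hne : ts ≠ [] := by rintro rfl; simp [rpath, rpathLast] at h2; omega
    obtain ⟨ss, u, rfl⟩ := snoc_of_ne_nil ts hne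
    by_cases hi : i ≤ 1
    · rw [show i = 1 by omega, attachR_one]
      simp [nverts, nvertsL_append, nvertsList]
      try omega
    · rw [attachR_ge2 _ _ (by omega), attachRLast_concat]
      rw [rpath_concat] at h2
      have h3 := nverts_attachR u (i-1) (by omega) (by omega)
      simp [nverts, nvertsL_append, nvertsList]
      omega
termination_by t i => sizeOf t
decreasing_by subst_vars; exact sizeOf_last_lt ss u

theorem commA : ∀ (t : DTree) (k m : ℕ), 1 ≤ k → k ≤ rpath t → m ≤ fl t →
    incUpTo (attachR t k) m = (attachR ((incUpTo t m).1) k, (incUpTo t m).2)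
  | .leaf _, k, m => fun h1 h2 _ => by simp [rpath] at h2; omega
  | .node ts, k, m => fun h1 h2 hm => by
    have hne : ts ≠ [] := by rintro rfl; simp [rpath, rpathLast] at h2; omega
    obtain ⟨ss, u, rfl⟩ := snoc_of_ne_nil ts hne
    have hsnd : (incList (ss ++ [u]) m).2 = 0 := by
      rw [incL_snd]
      rw [fl_node, flL] at hm
      simp only [flL]
      omega
    by_cases hi : k ≤ 1
    · rw [show k = 1 by omega, attachR_one]
      have e1 : incUpTo (.node ((ss ++ [u]) ++ [.leaf (-1)])) m
          = (.node ((incList ((ss ++ [u]) ++ [.leaf (-1)]) m).1),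
             (incList ((ss ++ [u]) ++ [.leaf (-1)]) m).2) := rfl
      rw [e1, incList_append]
      rw [hsnd]
      have e2 : incList [DTree.leaf (-1)] 0 = ([DTree.leaf (-1)], 0) := by
        simp [incList, incUpTo]
      rw [e2]
      have e3 : incUpTo (.node (ss ++ [u])) m
          = (.node ((incList (ss ++ [u]) m).1), (incList (ss ++ [u]) m).2) := rfl
      rw [e3, attachR_one, hsnd]
    · rw [attachR_ge2 _ _ (by omega), attachRLast_concat]
      rw [rpath_concat] at h2
      have hm1 : (incList ss m).2 ≤ fl u := by
        rw [incL_snd]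
        rw [fl_concat_node] at hm
        omega
      have ih := commA u (k-1) ((incList ss m).2) (by omega) (by omega) hm1
      have e1 : incUpTo (.node (ss ++ [attachR u (k-1)])) m
          = (.node ((incList (ss ++ [attachR u (k-1)]) m).1),
             (incList (ss ++ [attachR u (k-1)]) m).2) := rfl
      rw [e1, incList_append]
      have e2 : incList [attachR u (k-1)] ((incList ss m).2)
          = ([(incUpTo (attachR u (k-1)) ((incList ss m).2)).1],
             (incUpTo (attachR u (k-1)) ((incList ss m).2)).2) := by
        simp [incList]
      rw [e2, ih]
      have e3 : incUpTo (.node (ss ++ [u])) m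
          = (.node ((incList (ss ++ [u]) m).1), (incList (ss ++ [u]) m).2) := rfl
      rw [e3, incList_append]
      have e4 : incList [u] ((incList ss m).2)
          = ([(incUpTo u ((incList ss m).2)).1], (incUpTo u ((incList ss m).2)).2) := by
        simp [incList]
      rw [e4, attachR_ge2 _ _ (by omega), attachRLast_concat]
termination_by t k m => sizeOf t
decreasing_by subst_vars; exact sizeOf_last_lt ss u

lemma attachRLast_cons (c : DTree) (cs : List DTree) (j : ℕ) (h : cs ≠ []) :
    attachRLast (c :: cs) j = c :: attachRLast cs j := by
  cases cs with
  | nil => simp at h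
  | cons a as => rfl

lemma attachR_cons (c : DTree) (cs : List DTree) (k : ℕ) (hcs : cs ≠ []) (hk : 1 ≤ k) :
    attachR (.node (c :: cs)) k = .node (c :: kids (attachR (.node cs) k)) := by
  by_cases hi : k ≤ 1
  · rw [show k = 1 by omega, attachR_one, attachR_one]
    simp
  · rw [attachR_ge2 _ _ (by omega), attachR_ge2 _ _ (by omega),
        attachRLast_cons _ _ _ hcs]
    simp

lemma mem_labelsL {x : ℤ} {ts : List DTree} :
    x ∈ leafLabelsList ts ↔ ∃ u ∈ ts, x ∈ leafLabels u := by
  induction ts with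
  | nil => simp [leafLabelsList]
  | cons t ts ih => simp [labelsL_cons, ih]; try tauto

lemma labelsL_single (u : DTree) : leafLabelsList [u] = leafLabels u := by
  simp [leafLabelsList]

lemma deco_hne {ts : List DTree} {d : ℕ} (h : DecoAt (.node ts) d) : ts ≠ [] := by
  cases h with | node hne _ _ _ => exact hne

lemma deco_h2 {ts : List DTree} {d : ℕ} (h : DecoAt (.node ts) d) :
    0 < d → ∃ x ∈ leafLabelsList ts, x ≤ (d : ℤ) - 2 := by
  cases h with | node _ h2 _ _ => exact h2

lemma deco_h3 {ts : List DTree} {d : ℕ} (h : DecoAt (.node ts) d) :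
    ∀ t' ∈ ts, ∀ a b, leafLabels t' = a ++ (d : ℤ) :: b → ∀ x ∈ a, (d : ℤ) ≤ x := by
  cases h with | node _ _ h3 _ => exact h3

lemma deco_h4 {ts : List DTree} {d : ℕ} (h : DecoAt (.node ts) d) :
    ∀ t' ∈ ts, DecoAt t' (d + 1) := by
  cases h with | node _ _ _ h4 => exact h4

theorem labels_ne : ∀ (t : DTree) (d : ℕ), DecoAt t d → leafLabels t ≠ []
  | .leaf l, d => fun _ => by simp [leafLabels]
  | .node ts, d => fun hd => by
    match ts, deco_hne hd with
    | t :: ts', _ =>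
      have h1 := labels_ne t (d+1) (deco_h4 hd t (by simp))
      simp only [leafLabels, labelsL_cons]
      intro hcon
      rw [List.append_eq_nil_iff] at hcon
      exact h1 hcon.1
termination_by t d => sizeOf t
decreasing_by exact sizeOf_mem_lt (by simp)

theorem deco_labels_ge : ∀ (t : DTree) (d : ℕ), DecoAt t d → ∀ x ∈ leafLabels t, -1 ≤ x
  | .leaf l, d => fun hd => by
    cases hd with
    | leaf h1 h2 => intro x hx; simp [leafLabels] at hx; omega
  | .node ts, d => fun hd => by
    intro x hx
    rw [show leafLabels (.node ts) = leafLabelsList ts from rfl, mem_labelsL] at hx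
    obtain ⟨u, hu, hxu⟩ := hx
    exact deco_labels_ge u (d+1) (deco_h4 hd u hu) x hxu
termination_by t d => sizeOf t
decreasing_by exact sizeOf_mem_lt hu

theorem deco_last_lt : ∀ (t : DTree) (d : ℕ) (ts : List DTree) (L : List ℤ) (x : ℤ),
    DecoAt t d → t = .node ts → leafLabels t = L ++ [x] → x < d
  | t, d, ts, L, x => fun hd ht hl => by
    subst ht
    obtain ⟨ss, u, rfl⟩ := snoc_of_ne_nil ts (deco_hne hd)
    have hu : DecoAt u (d+1) := deco_h4 hd u (by simp)
    have hlu : leafLabels u ≠ [] := labels_ne u (d+1) hu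
    rw [show leafLabels (.node (ss ++ [u])) = leafLabelsList (ss ++ [u]) from rfl,
        labelsL_append, labelsL_single] at hl
    obtain ⟨Lu, hLu, hL⟩ := snoc_split hl hlu
    cases u with
    | leaf l =>
      cases hu with
      | leaf hh1 hh2 =>
        have e1 : leafLabels (.leaf l) = [] ++ [l] := rfl
        rw [e1] at hLu
        obtain ⟨-, h2⟩ := snoc_inj hLu
        push_cast at hh2 ⊢
        omega
    | node us =>
      have ihlt : x < ((d+1 : ℕ) : ℤ) := deco_last_lt (.node us) (d+1) us Lu x hu rfl hLu
      by_contra hcon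
      push_neg at hcon
      have hxd : x = (d : ℤ) := by push_cast at ihlt ⊢; omega
      subst hxd
      have hall : ∀ y ∈ Lu, (d:ℤ) ≤ y :=
        deco_h3 hd (.node us) (by simp) Lu [] (by simpa using hLu)
      obtain ⟨y, hy, hyle⟩ := deco_h2 hu (by omega)
      have hy2 : y ∈ leafLabels (DTree.node us) := hy
      rw [hLu] at hy2
      rcases List.mem_append.1 hy2 with h | h
      · have := hall y h
        push_cast at hyle this
        omega
      · simp at h
        subst h
        push_cast at hyle
        omega
termination_by t d ts L x => sizeOf t
decreasing_by subst_vars; exact sizeOf_last_lt _ _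

lemma isDeco_node {t : DTree} (h : IsDeco t) : ∃ ts, t = .node ts ∧ ts ≠ [] := by
  cases t with
  | leaf l => cases h with | leaf h1 h2 => push_cast at h2; omega
  | node ts => exact ⟨ts, rfl, deco_hne h⟩

lemma deco_last {t : DTree} (h : IsDeco t) : ∃ L, leafLabels t = L ++ [-1] := by
  obtain ⟨ts, rfl, hne⟩ := isDeco_node h
  have h1 : leafLabels (.node ts) ≠ [] := labels_ne _ 0 h
  obtain ⟨L, x, hL⟩ := snoc_of_ne_nil _ h1
  have h2 : x < ((0:ℕ) : ℤ) := deco_last_lt _ 0 ts L x h rfl hL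
  have h3 : -1 ≤ x := deco_labels_ge _ 0 h x (by rw [hL]; simp)
  have : x = -1 := by push_cast at h2; omega
  subst this
  exact ⟨L, hL⟩

lemma fl_pos {t : DTree} (h : IsDeco t) : 1 ≤ fl t := by
  obtain ⟨L, hL⟩ := deco_last h
  simp [fl, hL, List.count_append]

lemma deco_drop_left {c : DTree} {cs : List DTree} (h : IsDeco (.node (c :: cs)))
    (hcs : cs ≠ []) : IsDeco (.node cs) :=
  DecoAt.node hcs (fun h' => absurd h' (by omega))
    (fun t' ht' => deco_h3 h t' (by simp [ht']))
    (fun t' ht' => deco_h4 h t' (by simp [ht']))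

lemma deco_first {c : DTree} {cs : List DTree} (h : IsDeco (.node (c :: cs))) :
    IsDeco (.node [c]) :=
  DecoAt.node (by simp) (fun h' => absurd h' (by omega))
    (fun t' ht' => deco_h3 h t' (by simp at ht'; simp [ht']))
    (fun t' ht' => deco_h4 h t' (by simp at ht'; simp [ht']))

/-! ### Section 4: growR / replaceR / addExceptLast lemmas -/

lemma growRLast_cons (c : DTree) (cs : List DTree) (h : cs ≠ []) :
    growRLast (c :: cs) = c :: growRLast cs := by
  cases cs with
  | nil => simp at h
  | cons a as => rfl

lemma growR_cons (c : DTree) (cs : List DTree) (h : cs ≠ []) :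
    growR (.node (c :: cs)) = .node (c :: kids (growR (.node cs))) := by
  rw [show growR (.node (c :: cs)) = .node (growRLast (c :: cs)) from rfl,
      growRLast_cons c cs h]
  rfl

lemma replaceRList_cons (X c : DTree) (cs : List DTree) (h : cs ≠ []) :
    replaceRList X (c :: cs) = c :: replaceRList X cs := by
  cases cs with
  | nil => simp at h
  | cons a as => rfl

lemma replaceR_cons (X c : DTree) (cs : List DTree) (h : cs ≠ []) :
    replaceR X (.node (c :: cs)) = .node (c :: kids (replaceR X (.node cs))) := by
  rw [show replaceR X (.node (c :: cs)) = .node (replaceRList X (c :: cs)) from rfl,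
      replaceRList_cons X c cs h]
  rfl

theorem labels_growR : ∀ (t : DTree) (d : ℕ) (L : List ℤ) (x : ℤ), DecoAt t d →
    leafLabels t = L ++ [x] → leafLabels (growR t) = L ++ [-1]
  | .leaf l, d, L, x => fun hd hl => by
    have e1 : leafLabels (.leaf l) = [] ++ [l] := rfl
    rw [e1] at hl
    obtain ⟨rfl, rfl⟩ := snoc_inj hl.symm
    rfl
  | .node ts, d, L, x => fun hd hl => by
    obtain ⟨ss, u, rfl⟩ := snoc_of_ne_nil ts (deco_hne hd)
    have hu : DecoAt u (d+1) := deco_h4 hd u (by simp)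
    rw [show leafLabels (.node (ss ++ [u])) = leafLabelsList (ss ++ [u]) from rfl,
        labelsL_append, labelsL_single] at hl
    obtain ⟨Lu, hLu, rfl⟩ := snoc_split hl (labels_ne u (d+1) hu)
    have ih := labels_growR u (d+1) Lu x hu hLu
    rw [show growR (.node (ss ++ [u])) = .node (growRLast (ss ++ [u])) from rfl,
        growRLast_concat,
        show leafLabels (.node (ss ++ [growR u])) = leafLabelsList (ss ++ [growR u]) from rfl,
        labelsL_append, labelsL_single, ih, List.append_assoc]
termination_by t d L x => sizeOf t
decreasing_by subst_vars; exact sizeOf_last_lt _ _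

theorem rpath_growR : ∀ (t : DTree) (d : ℕ), DecoAt t d → rpath (growR t) = rpath t + 1
  | .leaf l, d => fun hd => by
    rw [show growR (.leaf l) = .node [.leaf (-1)] from rfl]
    simp [rpath, rpathLast]
  | .node ts, d => fun hd => by
    obtain ⟨ss, u, rfl⟩ := snoc_of_ne_nil ts (deco_hne hd)
    have hu : DecoAt u (d+1) := deco_h4 hd u (by simp)
    rw [show growR (.node (ss ++ [u])) = .node (growRLast (ss ++ [u])) from rfl,
        growRLast_concat, rpath_concat, rpath_concat, rpath_growR u (d+1) hu]
termination_by t d => sizeOf t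
decreasing_by subst_vars; exact sizeOf_last_lt _ _

theorem nverts_growR : ∀ (t : DTree) (d : ℕ), DecoAt t d → nverts (growR t) = nverts t + 1
  | .leaf l, d => fun hd => by
    rw [show growR (.leaf l) = .node [.leaf (-1)] from rfl]
    simp [nverts, nvertsList]
  | .node ts, d => fun hd => by
    obtain ⟨ss, u, rfl⟩ := snoc_of_ne_nil ts (deco_hne hd)
    have hu : DecoAt u (d+1) := deco_h4 hd u (by simp)
    rw [show growR (.node (ss ++ [u])) = .node (growRLast (ss ++ [u])) from rfl,
        growRLast_concat]
    simp only [nverts, nvertsL_append, nvertsList, nverts_growR u (d+1) hu]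
    omega
termination_by t d => sizeOf t
decreasing_by subst_vars; exact sizeOf_last_lt _ _

lemma fl_growR {t : DTree} {d : ℕ} {L : List ℤ} (hd : DecoAt t d)
    (hl : leafLabels t = L ++ [-1]) : fl (growR t) = fl t := by
  rw [fl, fl, labels_growR t d L (-1) hd hl, hl]

theorem labels_replaceR : ∀ (X t : DTree) (d : ℕ) (L : List ℤ) (x : ℤ), DecoAt t d →
    leafLabels t = L ++ [x] → leafLabels (replaceR X t) = L ++ leafLabels X
  | X, .leaf l, d, L, x => fun hd hl => by
    have e1 : leafLabels (.leaf l) = [] ++ [l] := rfl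
    rw [e1] at hl
    obtain ⟨rfl, rfl⟩ := snoc_inj hl.symm
    rfl
  | X, .node ts, d, L, x => fun hd hl => by
    obtain ⟨ss, u, rfl⟩ := snoc_of_ne_nil ts (deco_hne hd)
    have hu : DecoAt u (d+1) := deco_h4 hd u (by simp)
    rw [show leafLabels (.node (ss ++ [u])) = leafLabelsList (ss ++ [u]) from rfl,
        labelsL_append, labelsL_single] at hl
    obtain ⟨Lu, hLu, rfl⟩ := snoc_split hl (labels_ne u (d+1) hu)
    have ih := labels_replaceR X u (d+1) Lu x hu hLu
    rw [show replaceR X (.node (ss ++ [u])) = .node (replaceRList X (ss ++ [u])) from rfl,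
        replaceRList_concat,
        show leafLabels (.node (ss ++ [replaceR X u])) = leafLabelsList (ss ++ [replaceR X u]) from rfl,
        labelsL_append, labelsL_single, ih, List.append_assoc]
termination_by X t d L x => sizeOf t
decreasing_by subst_vars; exact sizeOf_last_lt _ _

theorem rpath_replaceR : ∀ (X t : DTree) (d : ℕ), DecoAt t d →
    rpath (replaceR X t) = rpath t + rpath X
  | X, .leaf l, d => fun hd => by simp [replaceR, rpath]
  | X, .node ts, d => fun hd => by
    obtain ⟨ss, u, rfl⟩ := snoc_of_ne_nil ts (deco_hne hd)
    have hu : DecoAt u (d+1) := deco_h4 hd u (by simp)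
    rw [show replaceR X (.node (ss ++ [u])) = .node (replaceRList X (ss ++ [u])) from rfl,
        replaceRList_concat, rpath_concat, rpath_concat, rpath_replaceR X u (d+1) hu]
    omega
termination_by X t d => sizeOf t
decreasing_by subst_vars; exact sizeOf_last_lt _ _

theorem nverts_replaceR : ∀ (X t : DTree) (d : ℕ), DecoAt t d →
    nverts (replaceR X t) + 1 = nverts t + nverts X
  | X, .leaf l, d => fun hd => by simp [replaceR, nverts]; omega
  | X, .node ts, d => fun hd => by
    obtain ⟨ss, u, rfl⟩ := snoc_of_ne_nil ts (deco_hne hd)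
    have hu : DecoAt u (d+1) := deco_h4 hd u (by simp)
    rw [show replaceR X (.node (ss ++ [u])) = .node (replaceRList X (ss ++ [u])) from rfl,
        replaceRList_concat]
    have ih := nverts_replaceR X u (d+1) hu
    simp only [nverts, nvertsL_append, nvertsList] at *
    omega
termination_by X t d => sizeOf t
decreasing_by subst_vars; exact sizeOf_last_lt _ _

theorem labels_AEL : ∀ (r : ℤ) (t : DTree) (d : ℕ) (L : List ℤ) (x : ℤ), DecoAt t d →
    leafLabels t = L ++ [x] →
    leafLabels (addExceptLast r t) = L.map (· + r) ++ [x]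
  | r, .leaf l, d, L, x => fun hd hl => by
    have e1 : leafLabels (.leaf l) = [] ++ [l] := rfl
    rw [e1] at hl
    obtain ⟨rfl, rfl⟩ := snoc_inj hl.symm
    rfl
  | r, .node ts, d, L, x => fun hd hl => by
    obtain ⟨ss, u, rfl⟩ := snoc_of_ne_nil ts (deco_hne hd)
    have hu : DecoAt u (d+1) := deco_h4 hd u (by simp)
    rw [show leafLabels (.node (ss ++ [u])) = leafLabelsList (ss ++ [u]) from rfl,
        labelsL_append, labelsL_single] at hl
    obtain ⟨Lu, hLu, rfl⟩ := snoc_split hl (labels_ne u (d+1) hu)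
    have ih := labels_AEL r u (d+1) Lu x hu hLu
    rw [show addExceptLast r (.node (ss ++ [u])) = .node (addExceptLastList r (ss ++ [u])) from rfl,
        addExceptLastList_concat,
        show leafLabels (.node (addAllList r ss ++ [addExceptLast r u]))
          = leafLabelsList (addAllList r ss ++ [addExceptLast r u]) from rfl,
        labelsL_append, labelsL_single, ih, labelsL_addAll, List.map_append, List.append_assoc]
termination_by r t d L x => sizeOf t
decreasing_by subst_vars; exact sizeOf_last_lt _ _

theorem rpath_AEL : ∀ (r : ℤ) (t : DTree), rpath (addExceptLast r t) = rpath t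
  | r, .leaf l => by simp [addExceptLast, rpath]
  | r, .node ts => by
    match ts with
    | [] => rfl
    | t :: ts' =>
      obtain ⟨ss, u, hh⟩ := snoc_of_ne_nil (t :: ts') (by simp)
      rw [hh]
      rw [show addExceptLast r (.node (ss ++ [u])) = .node (addExceptLastList r (ss ++ [u])) from rfl,
          addExceptLastList_concat, rpath_concat, rpath_concat, rpath_AEL r u]
termination_by r t => sizeOf t
decreasing_by rw [hh]; exact sizeOf_last_lt _ _

theorem nverts_AEL : ∀ (r : ℤ) (t : DTree), nverts (addExceptLast r t) = nverts t
  | r, .leaf l => by simp [addExceptLast, nverts]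
  | r, .node ts => by
    match ts with
    | [] => rfl
    | t :: ts' =>
      obtain ⟨ss, u, hh⟩ := snoc_of_ne_nil (t :: ts') (by simp)
      rw [hh]
      rw [show addExceptLast r (.node (ss ++ [u])) = .node (addExceptLastList r (ss ++ [u])) from rfl,
          addExceptLastList_concat]
      simp only [nverts, nvertsL_append, nvertsList, nvertsL_addAll, nverts_AEL r u]
termination_by r t => sizeOf t
decreasing_by rw [hh]; exact sizeOf_last_lt _ _

/-! ### Section 5: deco transport lemmas -/

lemma h3_single_neg (d : ℕ) : ∀ (a b : List ℤ), ([(-1:ℤ)] = a ++ (d:ℤ) :: b) →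
    ∀ x ∈ a, (d:ℤ) ≤ x := by
  intro a b h x hx
  cases a with
  | nil => simp at hx
  | cons c a' =>
    simp only [List.cons_append, List.cons.injEq] at h
    exact absurd h.2.symm (by simp)

lemma map_eq_append_cons {α β : Type*} {f : α → β} {L : List α} {a b : List β} {y : β}
    (h : L.map f = a ++ y :: b) :
    ∃ a₀ z b₀, L = a₀ ++ z :: b₀ ∧ a = a₀.map f ∧ f z = y ∧ b = b₀.map f := by
  induction a generalizing L with
  | nil =>
    cases L with
    | nil => simp at h
    | cons z L' =>
      simp only [List.map_cons, List.nil_append, List.cons.injEq] at h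
      exact ⟨[], z, L', rfl, rfl, h.1, h.2.symm⟩
  | cons w a' ih =>
    cases L with
    | nil => simp at h
    | cons z L' =>
      simp only [List.map_cons, List.cons_append, List.cons.injEq] at h
      obtain ⟨a₀, z₀, b₀, rfl, rfl, hz, hb⟩ := ih h.2
      exact ⟨z :: a₀, z₀, b₀, rfl, by simp [h.1], hz, hb⟩

lemma decList_ne_nil {ts : List DTree} (h : ts ≠ []) : decList ts ≠ [] := by
  cases ts with
  | nil => simp at h
  | cons a as => simp [decList]

lemma mem_decList {u : DTree} {ts : List DTree} :
    u ∈ decList ts ↔ ∃ t' ∈ ts, u = decLeaves t' := by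
  induction ts with
  | nil => simp [decList]
  | cons t ts ih => simp [decList, ih]; try tauto

theorem deco_dec : ∀ (t : DTree) (d : ℕ), DecoAt t (d+1) → (0 < d ∨ ∃ ts, t = .node ts) →
    DecoAt (decLeaves t) d
  | .leaf l, d => fun hd hside => by
    have hdpos : 0 < d := by
      rcases hside with h | ⟨ts, hts⟩
      · exact h
      · simp at hts
    cases hd with
    | leaf h1 h2 =>
      by_cases h : l = -1
      · subst h
        rw [show decLeaves (.leaf (-1)) = .leaf (-1) from by simp [decLeaves]]
        exact DecoAt.leaf (by omega) (by push_cast; omega)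
      · rw [show decLeaves (.leaf l) = .leaf (l-1) from by simp [decLeaves, h]]
        push_cast at h2
        exact DecoAt.leaf (by omega) (by push_cast; omega)
  | .node ts, d => fun hd hside => by
    rw [show decLeaves (.node ts) = .node (decList ts) from rfl]
    refine DecoAt.node (decList_ne_nil (deco_hne hd)) ?_ ?_ ?_
    · intro hdpos
      obtain ⟨x, hx, hxle⟩ := deco_h2 hd (by omega)
      refine ⟨dec1 x, ?_, ?_⟩
      · rw [show leafLabelsList (decList ts) = leafLabels (decLeaves (.node ts)) from rfl,
            labels_dec]
        exact List.mem_map_of_mem hx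
      · simp only [dec1]
        push_cast at hxle ⊢
        by_cases h : x = -1 <;> simp [h] <;> omega
    · intro t'' ht'' a b heq x hx
      obtain ⟨t', ht', rfl⟩ := mem_decList.1 ht''
      rw [labels_dec] at heq
      obtain ⟨a₀, z, b₀, hL, rfl, hz, -⟩ := map_eq_append_cons heq
      have hzval : z = ((d:ℤ) + 1) := by
        simp only [dec1] at hz
        by_cases h : z = -1
        · rw [if_pos h] at hz; omega
        · rw [if_neg h] at hz; omega
      rw [List.mem_map] at hx
      obtain ⟨x₀, hx₀, rfl⟩ := hx
      have hall := deco_h3 hd t' ht' a₀ b₀ (by rw [hL, hzval]; push_cast; ring_nf)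
      have hx₀ge := hall x₀ hx₀
      simp only [dec1]
      push_cast at hx₀ge ⊢
      by_cases h : x₀ = -1
      · omega
      · simp [h]; omega
    · intro t'' ht''
      obtain ⟨t', ht', rfl⟩ := mem_decList.1 ht''
      exact deco_dec t' (d+1) (deco_h4 hd t' ht') (Or.inl (by omega))
termination_by t d => sizeOf t
decreasing_by exact sizeOf_mem_lt ht'

theorem deco_attachR : ∀ (t : DTree) (d i : ℕ), DecoAt t d → 1 ≤ i → i ≤ rpath t →
    DecoAt (attachR t i) d
  | .leaf _, d, i => fun _ h1 h2 => by simp [rpath] at h2; omega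
  | .node ts, d, i => fun hd h1 h2 => by
    have hne : ts ≠ [] := by rintro rfl; simp [rpath, rpathLast] at h2; omega
    obtain ⟨ss, u, rfl⟩ := snoc_of_ne_nil ts hne
    have hu : DecoAt u (d+1) := deco_h4 hd u (by simp)
    by_cases hi : i ≤ 1
    · rw [show i = 1 by omega, attachR_one]
      refine DecoAt.node (by simp) ?_ ?_ ?_
      · intro hdpos
        obtain ⟨x, hx, hxle⟩ := deco_h2 hd hdpos
        exact ⟨x, by rw [labelsL_append]; exact List.mem_append_left _ hx, hxle⟩
      · intro t' ht' a b heq x hx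
        rw [List.mem_append] at ht'
        rcases ht' with h | h
        · exact deco_h3 hd t' h a b heq x hx
        · simp at h
          subst h
          exact h3_single_neg d a b heq x hx
      · intro t' ht'
        rw [List.mem_append] at ht'
        rcases ht' with h | h
        · exact deco_h4 hd t' h
        · simp at h
          subst h
          exact DecoAt.leaf (by omega) (by push_cast; omega)
    · rw [attachR_ge2 _ _ (by omega), attachRLast_concat]
      rw [rpath_concat] at h2
      have hlab := labels_attachR u (i-1) (by omega) (by omega)
      refine DecoAt.node (by simp) ?_ ?_ ?_
      · intro hdpos
        obtain ⟨x, hx, hxle⟩ := deco_h2 hd hdpos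
        refine ⟨x, ?_, hxle⟩
        rw [labelsL_append, labelsL_single, hlab]
        rw [labelsL_append, labelsL_single] at hx
        rw [List.mem_append] at hx ⊢
        rcases hx with h | h
        · exact Or.inl h
        · exact Or.inr (by rw [List.mem_append]; exact Or.inl h)
      · intro t' ht' a b heq x hx
        rw [List.mem_append] at ht'
        rcases ht' with h | h
        · exact deco_h3 hd t' (by simp [h]) a b heq x hx
        · simp at h
          subst h
          rw [hlab] at heq
          rcases concat_eq_append_cons heq with ⟨-, -, hcon⟩ | ⟨b', rfl, hLu⟩
          · exact absurd hcon (by push_cast; omega)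
          · exact deco_h3 hd u (by simp) a b' hLu x hx
      · intro t' ht'
        rw [List.mem_append] at ht'
        rcases ht' with h | h
        · exact deco_h4 hd t' (by simp [h])
        · simp at h
          subst h
          exact deco_attachR u (d+1) (i-1) hu (by omega) (by omega)
termination_by t d i => sizeOf t
decreasing_by subst_vars; exact sizeOf_last_lt _ _

theorem deco_growR : ∀ (t : DTree) (d : ℕ), DecoAt t d → DecoAt (growR t) d
  | .leaf l, d => fun hd => by
    have hdpos : 0 < d := by
      cases hd with | leaf hh1 hh2 => push_cast at hh2; omega
    rw [show growR (.leaf l) = .node [.leaf (-1)] from rfl]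
    refine DecoAt.node (by simp) ?_ ?_ ?_
    · intro _
      exact ⟨-1, by simp [leafLabelsList, leafLabels], by push_cast; omega⟩
    · intro t' ht' a b heq x hx
      simp at ht'
      subst ht'
      exact h3_single_neg d a b heq x hx
    · intro t' ht'
      simp at ht'
      subst ht'
      exact DecoAt.leaf (by omega) (by push_cast; omega)
  | .node ts, d => fun hd => by
    obtain ⟨ss, u, rfl⟩ := snoc_of_ne_nil ts (deco_hne hd)
    have hu : DecoAt u (d+1) := deco_h4 hd u (by simp)
    obtain ⟨Lu, xu, hLu⟩ := snoc_of_ne_nil _ (labels_ne u (d+1) hu)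
    have hlab := labels_growR u (d+1) Lu xu hu hLu
    rw [show growR (.node (ss ++ [u])) = .node (growRLast (ss ++ [u])) from rfl,
        growRLast_concat]
    refine DecoAt.node (by simp) ?_ ?_ ?_
    · intro hdpos
      obtain ⟨x, hx, hxle⟩ := deco_h2 hd hdpos
      rw [labelsL_append, labelsL_single, hLu, List.mem_append] at hx
      rcases hx with h | h
      · exact ⟨x, by rw [labelsL_append]; exact List.mem_append_left _ h, hxle⟩
      · rw [List.mem_append] at h
        rcases h with h | h
        · refine ⟨x, ?_, hxle⟩
          rw [labelsL_append, labelsL_single, hlab]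
          exact List.mem_append_right _ (List.mem_append_left _ h)
        · refine ⟨-1, ?_, by push_cast; omega⟩
          rw [labelsL_append, labelsL_single, hlab]
          exact List.mem_append_right _ (by simp)
    · intro t' ht' a b heq x hx
      rw [List.mem_append] at ht'
      rcases ht' with h | h
      · exact deco_h3 hd t' (by simp [h]) a b heq x hx
      · simp at h
        subst h
        rw [hlab] at heq
        rcases concat_eq_append_cons heq with ⟨-, -, hcon⟩ | ⟨b', rfl, hLu'⟩
        · exact absurd hcon (by push_cast; omega)
        · refine deco_h3 hd u (by simp) a (b' ++ [xu]) ?_ x hx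
          rw [hLu, hLu']
          simp
    · intro t' ht'
      rw [List.mem_append] at ht'
      rcases ht' with h | h
      · exact deco_h4 hd t' (by simp [h])
      · simp at h
        subst h
        exact deco_growR u (d+1) hu
termination_by t d => sizeOf t
decreasing_by subst_vars; exact sizeOf_last_lt _ _

/-! ### Section 6: deco for addAll / addExceptLast / replaceR -/

lemma addAllList_ne_nil {r : ℤ} {ts : List DTree} (h : ts ≠ []) : addAllList r ts ≠ [] := by
  cases ts with
  | nil => simp at h
  | cons a as => simp [addAllList]

lemma mem_addAllList {r : ℤ} {u : DTree} {ts : List DTree} :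
    u ∈ addAllList r ts ↔ ∃ t' ∈ ts, u = addAll r t' := by
  induction ts with
  | nil => simp [addAllList]
  | cons t ts ih => simp [addAllList, ih]; try tauto

lemma last_lt {u : DTree} {d' : ℕ} {L : List ℤ} {x : ℤ} (hd : DecoAt u d')
    (hL : leafLabels u = L ++ [x]) : x < (d' : ℤ) := by
  cases u with
  | leaf l =>
    cases hd with
    | leaf h1 h2 =>
      have e1 : leafLabels (.leaf l) = [] ++ [l] := rfl
      rw [e1] at hL
      obtain ⟨-, rfl⟩ := snoc_inj hL.symm
      omega
  | node us => exact_mod_cast deco_last_lt _ d' us L x hd rfl hL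

theorem deco_addAll : ∀ (s : DTree) (d r : ℕ), 1 ≤ d → DecoAt s d →
    DecoAt (addAll (r:ℤ) s) (d + r)
  | .leaf l, d, r => fun hd1 hd => by
    cases hd with
    | leaf h1 h2 =>
      rw [show addAll (r:ℤ) (.leaf l) = .leaf (l + r) from rfl]
      exact DecoAt.leaf (by omega) (by push_cast at h2 ⊢; omega)
  | .node ts, d, r => fun hd1 hd => by
    rw [show addAll (r:ℤ) (.node ts) = .node (addAllList (r:ℤ) ts) from rfl]
    refine DecoAt.node (addAllList_ne_nil (deco_hne hd)) ?_ ?_ ?_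
    · intro _
      obtain ⟨x, hx, hxle⟩ := deco_h2 hd (by omega)
      refine ⟨x + r, ?_, by push_cast at hxle ⊢; omega⟩
      rw [show leafLabelsList (addAllList (r:ℤ) ts)
          = leafLabels (addAll (r:ℤ) (.node ts)) from rfl, labels_addAll]
      exact List.mem_map_of_mem hx
    · intro t'' ht'' a b heq x hx
      obtain ⟨t', ht', rfl⟩ := mem_addAllList.1 ht''
      rw [labels_addAll] at heq
      obtain ⟨a₀, z, b₀, hL, rfl, hz, -⟩ := map_eq_append_cons heq
      have hzval : z = (d:ℤ) := by push_cast at hz; omega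
      rw [List.mem_map] at hx
      obtain ⟨x₀, hx₀, rfl⟩ := hx
      have := deco_h3 hd t' ht' a₀ b₀ (by rw [hL, hzval]) x₀ hx₀
      push_cast
      omega
    · intro t'' ht''
      obtain ⟨t', ht', rfl⟩ := mem_addAllList.1 ht''
      have := deco_addAll t' (d+1) r (by omega) (deco_h4 hd t' ht')
      rwa [show d + 1 + r = d + r + 1 from by omega] at this
termination_by s d r => sizeOf s
decreasing_by exact sizeOf_mem_lt ht'

theorem deco_AEL : ∀ (u : DTree) (d r : ℕ), 1 ≤ r → DecoAt u d →
    (d = 0 → ∃ L, leafLabels u = L ++ [-1]) → DecoAt (addExceptLast (r:ℤ) u) (d + r)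
  | .leaf l, d, r => fun hr hd _ => by
    cases hd with
    | leaf h1 h2 =>
      rw [show addExceptLast (r:ℤ) (.leaf l) = .leaf l from rfl]
      exact DecoAt.leaf h1 (by push_cast at h2 ⊢; omega)
  | .node ts, d, r => fun hr hd hlast => by
    obtain ⟨ss, u', rfl⟩ := snoc_of_ne_nil ts (deco_hne hd)
    have hu : DecoAt u' (d+1) := deco_h4 hd u' (by simp)
    obtain ⟨Lu, xu, hLu⟩ := snoc_of_ne_nil _ (labels_ne u' (d+1) hu)
    have hlab := labels_AEL (r:ℤ) u' (d+1) Lu xu hu hLu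
    have hxu : xu < ((d:ℤ)+1) := by
      have := last_lt hu hLu; push_cast at this ⊢; omega
    rw [show addExceptLast (r:ℤ) (.node (ss ++ [u']))
        = .node (addExceptLastList (r:ℤ) (ss ++ [u'])) from rfl, addExceptLastList_concat]
    refine DecoAt.node (by simp) ?_ ?_ ?_
    · intro _
      by_cases hd0 : d = 0
      · subst hd0
        obtain ⟨L, hL⟩ := hlast rfl
        rw [show leafLabels (.node (ss ++ [u'])) = leafLabelsList (ss ++ [u']) from rfl,
            labelsL_append, labelsL_single, hLu, ← List.append_assoc] at hL
        obtain ⟨-, hxu1⟩ := snoc_inj hL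
        refine ⟨xu, ?_, by rw [hxu1]; push_cast; omega⟩
        rw [labelsL_append, labelsL_single, hlab]
        exact List.mem_append_right _ (by simp)
      · obtain ⟨x, hx, hxle⟩ := deco_h2 hd (by omega)
        rw [labelsL_append, labelsL_single, hLu, List.mem_append] at hx
        rcases hx with h | h
        · refine ⟨x + r, ?_, by push_cast at hxle ⊢; omega⟩
          rw [labelsL_append]
          refine List.mem_append_left _ ?_
          rw [show leafLabelsList (addAllList (r:ℤ) ss)
              = (leafLabelsList ss).map (· + (r:ℤ)) from labelsL_addAll _ _]
          exact List.mem_map_of_mem h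
        · rw [List.mem_append] at h
          rcases h with h | h
          · refine ⟨x + r, ?_, by push_cast at hxle ⊢; omega⟩
            rw [labelsL_append, labelsL_single, hlab]
            exact List.mem_append_right _ (List.mem_append_left _ (List.mem_map_of_mem h))
          · simp at h
            subst h
            refine ⟨x, ?_, by push_cast at hxle ⊢; omega⟩
            rw [labelsL_append, labelsL_single, hlab]
            exact List.mem_append_right _ (by simp)
    · intro t'' ht'' a b heq x hx
      rw [List.mem_append] at ht''
      rcases ht'' with h | h
      · obtain ⟨t', ht', rfl⟩ := mem_addAllList.1 h
        rw [labels_addAll] at heq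
        obtain ⟨a₀, z, b₀, hL, rfl, hz, -⟩ := map_eq_append_cons heq
        have hzval : z = (d:ℤ) := by push_cast at hz; omega
        rw [List.mem_map] at hx
        obtain ⟨x₀, hx₀, rfl⟩ := hx
        have := deco_h3 hd t' (by simp [ht']) a₀ b₀ (by rw [hL, hzval]) x₀ hx₀
        push_cast
        omega
      · simp at h
        subst h
        rw [hlab] at heq
        rcases concat_eq_append_cons heq with ⟨-, -, hcon⟩ | ⟨b', rfl, hsplit⟩
        · exfalso
          push_cast at hcon
          omega
        · obtain ⟨a₀, z, b₀, hL, rfl, hz, -⟩ := map_eq_append_cons hsplit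
          have hzval : z = (d:ℤ) := by push_cast at hz; omega
          rw [List.mem_map] at hx
          obtain ⟨x₀, hx₀, rfl⟩ := hx
          have := deco_h3 hd u' (by simp) a₀ (b₀ ++ [xu])
            (by rw [hLu, hL, hzval]; simp) x₀ hx₀
          push_cast
          omega
    · intro t'' ht''
      rw [List.mem_append] at ht''
      rcases ht'' with h | h
      · obtain ⟨t', ht', rfl⟩ := mem_addAllList.1 h
        have := deco_addAll t' (d+1) r (by omega) (deco_h4 hd t' (by simp [ht']))
        rwa [show d + 1 + r = d + r + 1 from by omega] at this
      · simp at h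
        subst h
        have := deco_AEL u' (d+1) r hr hu (by omega)
        rwa [show d + 1 + r = d + r + 1 from by omega] at this
termination_by u d r => sizeOf u
decreasing_by subst_vars; exact sizeOf_last_lt _ _

theorem deco_replace : ∀ (t : DTree) (d : ℕ) (P : DTree) (LP : List ℤ) (r : ℕ),
    DecoAt t d → (∃ L, leafLabels t = L ++ [-1]) → IsDeco P →
    leafLabels P = LP ++ [-1] → r = d + rpath t →
    DecoAt (replaceR (addExceptLast (r:ℤ) P) t) d
  | .leaf l, d, P, LP, r => fun hd hlast hP hPL hr => by
    have hl : l = -1 := by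
      obtain ⟨L, hL⟩ := hlast
      have e1 : leafLabels (.leaf l) = [] ++ [l] := rfl
      rw [e1] at hL
      exact (snoc_inj hL).2
    subst hl
    have hd1 : 1 ≤ d := by
      cases hd with | leaf h1 h2 => push_cast at h2; omega
    rw [show replaceR (addExceptLast (r:ℤ) P) (.leaf (-1)) = addExceptLast (r:ℤ) P from rfl]
    have := deco_AEL P 0 r (by simp [rpath] at hr; omega) hP (fun _ => ⟨LP, hPL⟩)
    rw [show r = d from by simp [rpath] at hr; omega]
    rwa [show (0:ℕ) + r = r from by omega, show r = d from by simp [rpath] at hr; omega] at this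
  | .node ts, d, P, LP, r => fun hd hlast hP hPL hr => by
    obtain ⟨ss, u, rfl⟩ := snoc_of_ne_nil ts (deco_hne hd)
    have hu : DecoAt u (d+1) := deco_h4 hd u (by simp)
    have hr' : r = (d + 1) + rpath u := by rw [hr, rpath_concat]; omega
    have hrpos : 1 ≤ r := by omega
    obtain ⟨L, hL⟩ := hlast
    rw [show leafLabels (.node (ss ++ [u])) = leafLabelsList (ss ++ [u]) from rfl,
        labelsL_append, labelsL_single] at hL
    obtain ⟨Lu, hLu, rfl⟩ := snoc_split hL (labels_ne u (d+1) hu)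
    have hPge : ∀ x ∈ LP, -1 ≤ x := by
      intro x hx
      exact deco_labels_ge P 0 hP x (by rw [hPL]; exact List.mem_append_left _ hx)
    have hlabX := labels_AEL (r:ℤ) P 0 LP (-1) hP hPL
    have hlabR := labels_replaceR (addExceptLast (r:ℤ) P) u (d+1) Lu (-1) hu hLu
    rw [show replaceR (addExceptLast (r:ℤ) P) (.node (ss ++ [u]))
        = .node (replaceRList (addExceptLast (r:ℤ) P) (ss ++ [u])) from rfl,
        replaceRList_concat]
    refine DecoAt.node (by simp) ?_ ?_ ?_
    · intro hdpos
      obtain ⟨x, hx, hxle⟩ := deco_h2 hd hdpos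
      rw [labelsL_append, labelsL_single, hLu, List.mem_append] at hx
      have hmem : ∀ y, y ∈ Lu ∨ y ∈ leafLabels (addExceptLast (r:ℤ) P) →
          y ∈ leafLabelsList (ss ++ [replaceR (addExceptLast (r:ℤ) P) u]) := by
        intro y hy
        rw [labelsL_append, labelsL_single, hlabR]
        refine List.mem_append_right _ ?_
        rw [List.mem_append]
        rcases hy with h | h
        · exact Or.inl h
        · exact Or.inr h
      rcases hx with h | h
      · refine ⟨x, ?_, hxle⟩
        rw [labelsL_append]
        exact List.mem_append_left _ h
      · rw [List.mem_append] at h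
        rcases h with h | h
        · exact ⟨x, hmem x (Or.inl h), hxle⟩
        · simp at h
          subst h
          refine ⟨-1, hmem (-1) (Or.inr ?_), hxle⟩
          rw [hlabX]
          exact List.mem_append_right _ (by simp)
    · intro t'' ht'' a b heq x hx
      rw [List.mem_append] at ht''
      rcases ht'' with h | h
      · exact deco_h3 hd t'' (by simp [h]) a b heq x hx
      · simp at h
        subst h
        rw [hlabR, hlabX, ← List.append_assoc] at heq
        rcases concat_eq_append_cons heq with ⟨-, -, hcon⟩ | ⟨b', rfl, hsplit⟩
        · exact absurd hcon (by push_cast; omega)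
        · -- hsplit : Lu ++ LP.map (·+r) = a ++ ↑d :: b'
          rcases List.append_eq_append_iff.1 hsplit with ⟨w, rfl, hw⟩ | ⟨w, rfl, hw⟩
          · -- d-labeled leaf inside the P part
            obtain ⟨w₀, z, b₀, hLP, rfl, hz, -⟩ := map_eq_append_cons hw
            have hzge : -1 ≤ z := hPge z (by rw [hLP]; simp)
            -- z + r = d forces rpath u = 0 and z = -1
            have hru : rpath u = 0 ∧ z = -1 := by omega
            -- u must be a leaf, hence Lu = []
            have hLu0 : Lu = [] := by
              cases u with
              | leaf l =>
                have e1 : leafLabels (.leaf l) = [] ++ [l] := rfl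
                rw [e1] at hLu
                exact (snoc_inj hLu).1.symm
              | node us =>
                exfalso
                have := rpath_pos us (deco_hne hu)
                omega
            subst hLu0
            simp only [List.nil_append] at hx ⊢
            rw [List.mem_map] at hx
            obtain ⟨x₀, hx₀, rfl⟩ := hx
            have : -1 ≤ x₀ := hPge x₀ (by rw [hLP]; exact List.mem_append_left _ hx₀)
            omega
          · -- hw : ↑d :: b' = w ++ LP.map (·+r), Lu = a ++ w
            cases w with
            | nil =>
              simp only [List.nil_append] at hw
              obtain ⟨a₀, z, b₀, hLP, ha₀, hz, -⟩ :=
                map_eq_append_cons (a := ([] : List ℤ)) (y := (d:ℤ)) (b := b')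
                  (by simpa using hw.symm)
              have ha₀nil : a₀ = [] := by
                cases a₀ with
                | nil => rfl
                | cons c cs => simp at ha₀
              subst ha₀nil
              have hzge : -1 ≤ z := hPge z (by rw [hLP]; simp)
              have hru : rpath u = 0 := by omega
              simp only [List.append_nil] at hLu
              have hau : a = [] := by
                cases u with
                | leaf l =>
                  have e1 : leafLabels (.leaf l) = [] ++ [l] := rfl
                  rw [e1] at hLu
                  exact (snoc_inj hLu).1.symm
                | node us =>
                  exact absurd (rpath_pos us (deco_hne hu)) (by omega)
              subst hau
              simp at hx
            | cons z w' =>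
              simp only [List.cons_append, List.cons.injEq] at hw
              obtain ⟨hzd, hb'⟩ := hw
              refine deco_h3 hd u (by simp) a (w' ++ [-1]) ?_ x hx
              rw [hLu, ← hzd]
              simp
    · intro t'' ht''
      rw [List.mem_append] at ht''
      rcases ht'' with h | h
      · exact deco_h4 hd t'' (by simp [h])
      · simp at h
        subst h
        exact deco_replace u (d+1) P LP r hu ⟨Lu, hLu⟩ hP hPL hr'
termination_by t d P LP r => sizeOf t
decreasing_by subst_vars; exact sizeOf_last_lt _ _

/-! ### Section 7: incUpTo commutation lemmas -/

lemma count_neg_singleton_zero {l : ℤ} (h : l ≠ -1) : ([l] : List ℤ).count (-1) = 0 := by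
  rw [List.count_eq_zero]; simp [Ne.symm h]

lemma count_neg_map {LP : List ℤ} {r : ℕ} (hge : ∀ x ∈ LP, -1 ≤ x) (hr : 1 ≤ r) :
    ((LP.map (· + (r:ℤ))).count (-1)) = 0 := by
  rw [List.count_eq_zero]
  intro hcon
  rw [List.mem_map] at hcon
  obtain ⟨x, hx, hxx⟩ := hcon
  have := hge x hx
  omega

mutual
theorem commB_all : ∀ (t : DTree) (m : ℕ), (∀ x ∈ leafLabels t, -1 ≤ x) → fl t ≤ m →
    incUpTo t m = (addAll 1 t, m - fl t)
  | .leaf l, m => fun hge hm => by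
    have hl : -1 ≤ l := hge l (by simp [leafLabels])
    by_cases h : l = -1
    · subst h
      have : fl (DTree.leaf (-1)) = 1 := by simp [fl, leafLabels]
      rw [this] at hm
      simp [incUpTo, addAll, this, show 0 < m by omega]
    · have hfl : fl (DTree.leaf l) = 0 := by
        simp [fl, leafLabels, count_neg_singleton_zero h]
      simp [incUpTo, addAll, h, hfl]
  | .node ts, m => fun hge hm => by
    have e1 : incUpTo (.node ts) m = (.node ((incList ts m).1), (incList ts m).2) := rfl
    rw [e1, commB_allL ts m hge (by rw [fl_node] at hm; exact hm)]
    rw [show addAll 1 (.node ts) = .node (addAllList 1 ts) from rfl, fl_node]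
theorem commB_allL : ∀ (ts : List DTree) (m : ℕ), (∀ x ∈ leafLabelsList ts, -1 ≤ x) →
    flL ts ≤ m → incList ts m = (addAllList 1 ts, m - flL ts)
  | [], m => fun _ _ => by simp [incList, addAllList, flL, leafLabelsList]
  | t :: ts, m => fun hge hm => by
    have hflt : fl t ≤ m := by
      simp only [flL, labelsL_cons, List.count_append] at hm
      have : fl t = (leafLabels t).count (-1) := rfl
      rw [this]; omega
    rw [incList_cons, commB_all t m (fun x hx => hge x (by simp [labelsL_cons, hx])) hflt]
    have hm2 : flL ts ≤ m - fl t := by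
      simp only [flL, labelsL_cons, List.count_append] at hm ⊢
      have : fl t = (leafLabels t).count (-1) := rfl
      rw [this] at hflt ⊢ <;> omega
    rw [commB_allL ts (m - fl t) (fun x hx => hge x (by simp [labelsL_cons, hx])) hm2]
    rw [show addAllList 1 (t :: ts) = addAll 1 t :: addAllList 1 ts from rfl]
    simp only [flL, labelsL_cons, List.count_append, Prod.mk.injEq]
    refine ⟨by trivial, ?_⟩
    have : fl t = (leafLabels t).count (-1) := rfl
    rw [this] at hflt ⊢
    omega
end

theorem commB : ∀ (t : DTree) (d : ℕ) (L : List ℤ), DecoAt t d → leafLabels t = L ++ [-1] →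
    (incUpTo t (fl t - 1)).1 = addExceptLast 1 t
  | .leaf l, d, L => fun hd hL => by
    have hl : l = -1 := by
      have e1 : leafLabels (.leaf l) = [] ++ [l] := rfl
      rw [e1] at hL
      exact (snoc_inj hL).2
    subst hl
    have : fl (DTree.leaf (-1)) = 1 := by simp [fl, leafLabels]
    rw [this]
    simp [incUpTo, addExceptLast]
  | .node ts, d, L => fun hd hL => by
    obtain ⟨ss, u, rfl⟩ := snoc_of_ne_nil ts (deco_hne hd)
    have hu : DecoAt u (d+1) := deco_h4 hd u (by simp)
    rw [show leafLabels (.node (ss ++ [u])) = leafLabelsList (ss ++ [u]) from rfl,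
        labelsL_append, labelsL_single] at hL
    obtain ⟨Lu, hLu, rfl⟩ := snoc_split hL (labels_ne u (d+1) hu)
    have hge : ∀ x ∈ leafLabelsList (ss ++ [u]), -1 ≤ x := deco_labels_ge _ d hd
    have hgess : ∀ x ∈ leafLabelsList ss, -1 ≤ x := fun x hx =>
      hge x (by rw [labelsL_append]; exact List.mem_append_left _ hx)
    have hflu : 1 ≤ fl u := by simp [fl, hLu, List.count_append]
    have hm : flL ss ≤ fl (.node (ss ++ [u])) - 1 := by
      rw [fl_concat_node]; omega
    have e1 : (incUpTo (.node (ss ++ [u])) (fl (.node (ss ++ [u])) - 1)).1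
        = .node ((incList (ss ++ [u]) (fl (.node (ss ++ [u])) - 1)).1) := rfl
    rw [e1, incList_append, commB_allL ss _ hgess hm]
    have hsnd : fl (.node (ss ++ [u])) - 1 - flL ss = fl u - 1 := by
      rw [fl_concat_node]; omega
    rw [hsnd]
    have e2 : (incList [u] (fl u - 1)).1 = [(incUpTo u (fl u - 1)).1] := by
      simp [incList]
    rw [e2, commB u (d+1) Lu hu hLu]
    rw [show addExceptLast 1 (.node (ss ++ [u]))
        = .node (addExceptLastList 1 (ss ++ [u])) from rfl, addExceptLastList_concat]
termination_by t d L => sizeOf t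
decreasing_by subst_vars; exact sizeOf_last_lt _ _

theorem commC : ∀ (t : DTree) (d : ℕ) (L : List ℤ) (m : ℕ), DecoAt t d →
    leafLabels t = L ++ [-1] → m + 1 ≤ fl t →
    incUpTo (growR t) m = (growR ((incUpTo t m).1), (incUpTo t m).2)
  | .leaf l, d, L, m => fun hd hL hm => by
    have hl : l = -1 := by
      have e1 : leafLabels (.leaf l) = [] ++ [l] := rfl
      rw [e1] at hL
      exact (snoc_inj hL).2
    subst hl
    have hfl : fl (DTree.leaf (-1)) = 1 := by simp [fl, leafLabels]
    rw [hfl] at hm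
    have hm0 : m = 0 := by omega
    subst hm0
    have e1 : incUpTo (growR (.leaf (-1))) 0
        = (.node ((incList [.leaf (-1)] 0).1), (incList [.leaf (-1)] 0).2) := rfl
    rw [e1]
    simp [incList, incUpTo, growR, growRLast]
  | .node ts, d, L, m => fun hd hL hm => by
    obtain ⟨ss, u, rfl⟩ := snoc_of_ne_nil ts (deco_hne hd)
    have hu : DecoAt u (d+1) := deco_h4 hd u (by simp)
    rw [show leafLabels (.node (ss ++ [u])) = leafLabelsList (ss ++ [u]) from rfl,
        labelsL_append, labelsL_single] at hL
    obtain ⟨Lu, hLu, rfl⟩ := snoc_split hL (labels_ne u (d+1) hu)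
    rw [fl_concat_node] at hm
    have hflu : 1 ≤ fl u := by simp [fl, hLu, List.count_append]
    have hm1 : (incList ss m).2 + 1 ≤ fl u := by
      rw [incL_snd]; omega
    have ih := commC u (d+1) Lu ((incList ss m).2) hu hLu hm1
    rw [show growR (.node (ss ++ [u])) = .node (growRLast (ss ++ [u])) from rfl,
        growRLast_concat]
    have e1 : incUpTo (.node (ss ++ [growR u])) m
        = (.node ((incList (ss ++ [growR u]) m).1), (incList (ss ++ [growR u]) m).2) := rfl
    rw [e1, incList_append]
    have e2 : incList [growR u] ((incList ss m).2)
        = ([(incUpTo (growR u) ((incList ss m).2)).1],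
           (incUpTo (growR u) ((incList ss m).2)).2) := by simp [incList]
    rw [e2, ih]
    have e3 : incUpTo (.node (ss ++ [u])) m
        = (.node ((incList (ss ++ [u]) m).1), (incList (ss ++ [u]) m).2) := rfl
    rw [e3, incList_append]
    have e4 : incList [u] ((incList ss m).2)
        = ([(incUpTo u ((incList ss m).2)).1], (incUpTo u ((incList ss m).2)).2) := by
      simp [incList]
    rw [e4]
    rw [show growR (.node ((incList ss m).1 ++ [(incUpTo u ((incList ss m).2)).1]))
        = .node (growRLast ((incList ss m).1 ++ [(incUpTo u ((incList ss m).2)).1])) from rfl,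
        growRLast_concat]
termination_by t d L m => sizeOf t
decreasing_by subst_vars; exact sizeOf_last_lt _ _

mutual
theorem commD0a : ∀ (s : DTree) (r m : ℕ), 1 ≤ r → (∀ x ∈ leafLabels s, -1 ≤ x) →
    incUpTo (addAll (r:ℤ) s) m = (addAll ((r:ℤ)+1) s, m)
  | .leaf l, r, m => fun hr hge => by
    have hl : -1 ≤ l := hge l (by simp [leafLabels])
    have h1 : l + (r:ℤ) ≠ -1 := by omega
    rw [show addAll (r:ℤ) (.leaf l) = .leaf (l + r) from rfl]
    simp [incUpTo, h1, addAll]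
    ring
  | .node ts, r, m => fun hr hge => by
    rw [show addAll (r:ℤ) (.node ts) = .node (addAllList (r:ℤ) ts) from rfl]
    have e1 : incUpTo (.node (addAllList (r:ℤ) ts)) m
        = (.node ((incList (addAllList (r:ℤ) ts) m).1),
           (incList (addAllList (r:ℤ) ts) m).2) := rfl
    rw [e1, commD0aL ts r m hr hge]
    rfl
theorem commD0aL : ∀ (ts : List DTree) (r m : ℕ), 1 ≤ r →
    (∀ x ∈ leafLabelsList ts, -1 ≤ x) →
    incList (addAllList (r:ℤ) ts) m = (addAllList ((r:ℤ)+1) ts, m)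
  | [], r, m => fun _ _ => by simp [addAllList, incList]
  | t :: ts, r, m => fun hr hge => by
    rw [show addAllList (r:ℤ) (t :: ts) = addAll (r:ℤ) t :: addAllList (r:ℤ) ts from rfl,
        incList_cons,
        commD0a t r m hr (fun x hx => hge x (by simp [labelsL_cons, hx])),
        commD0aL ts r m hr (fun x hx => hge x (by simp [labelsL_cons, hx]))]
    rfl
end

theorem commD0 : ∀ (u : DTree) (d : ℕ) (LP : List ℤ) (r : ℕ), 1 ≤ r → DecoAt u d →
    leafLabels u = LP ++ [-1] →
    incUpTo (addExceptLast (r:ℤ) u) 0 = (addExceptLast ((r:ℤ)+1) u, 0)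
  | .leaf l, d, LP, r => fun hr hd hL => by
    have hl : l = -1 := by
      have e1 : leafLabels (.leaf l) = [] ++ [l] := rfl
      rw [e1] at hL
      exact (snoc_inj hL).2
    subst hl
    simp [addExceptLast, incUpTo]
  | .node ts, d, LP, r => fun hr hd hL => by
    obtain ⟨ss, u', rfl⟩ := snoc_of_ne_nil ts (deco_hne hd)
    have hu : DecoAt u' (d+1) := deco_h4 hd u' (by simp)
    rw [show leafLabels (.node (ss ++ [u'])) = leafLabelsList (ss ++ [u']) from rfl,
        labelsL_append, labelsL_single] at hL
    obtain ⟨Lu, hLu, rfl⟩ := snoc_split hL (labels_ne u' (d+1) hu)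
    have hgess : ∀ x ∈ leafLabelsList ss, -1 ≤ x := by
      intro x hx
      refine deco_labels_ge _ d hd x ?_
      rw [show leafLabels (.node (ss ++ [u'])) = leafLabelsList (ss ++ [u']) from rfl,
          labelsL_append]
      exact List.mem_append_left _ hx
    rw [show addExceptLast (r:ℤ) (.node (ss ++ [u']))
        = .node (addExceptLastList (r:ℤ) (ss ++ [u'])) from rfl, addExceptLastList_concat]
    have e1 : incUpTo (.node (addAllList (r:ℤ) ss ++ [addExceptLast (r:ℤ) u'])) 0
        = (.node ((incList (addAllList (r:ℤ) ss ++ [addExceptLast (r:ℤ) u']) 0).1),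
           (incList (addAllList (r:ℤ) ss ++ [addExceptLast (r:ℤ) u']) 0).2) := rfl
    rw [e1, incList_append, commD0aL ss r 0 hr hgess]
    have e2 : incList [addExceptLast (r:ℤ) u'] 0
        = ([(incUpTo (addExceptLast (r:ℤ) u') 0).1], (incUpTo (addExceptLast (r:ℤ) u') 0).2) := by
      simp [incList]
    rw [e2, commD0 u' (d+1) Lu r hr hu hLu]
    rw [show addExceptLast ((r:ℤ)+1) (.node (ss ++ [u']))
        = .node (addExceptLastList ((r:ℤ)+1) (ss ++ [u'])) from rfl, addExceptLastList_concat]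
termination_by u d LP r => sizeOf u
decreasing_by subst_vars; exact sizeOf_last_lt _ _

theorem commD : ∀ (t : DTree) (d : ℕ) (L : List ℤ) (P : DTree) (LP : List ℤ) (r m : ℕ),
    DecoAt t d → leafLabels t = L ++ [-1] → IsDeco P → leafLabels P = LP ++ [-1] →
    1 ≤ r → m + 1 ≤ fl t →
    incUpTo (replaceR (addExceptLast (r:ℤ) P) t) m
      = (replaceR (addExceptLast ((r:ℤ)+1) P) ((incUpTo t m).1), (incUpTo t m).2)
  | .leaf l, d, L, P, LP, r, m => fun hd hL hP hPL hr hm => by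
    have hl : l = -1 := by
      have e1 : leafLabels (.leaf l) = [] ++ [l] := rfl
      rw [e1] at hL
      exact (snoc_inj hL).2
    subst hl
    have hfl : fl (DTree.leaf (-1)) = 1 := by simp [fl, leafLabels]
    rw [hfl] at hm
    have hm0 : m = 0 := by omega
    subst hm0
    rw [show replaceR (addExceptLast (r:ℤ) P) (.leaf (-1)) = addExceptLast (r:ℤ) P from rfl,
        commD0 P 0 LP r hr hP hPL]
    simp [incUpTo, replaceR]
  | .node ts, d, L, P, LP, r, m => fun hd hL hP hPL hr hm => by
    obtain ⟨ss, u, rfl⟩ := snoc_of_ne_nil ts (deco_hne hd)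
    have hu : DecoAt u (d+1) := deco_h4 hd u (by simp)
    rw [show leafLabels (.node (ss ++ [u])) = leafLabelsList (ss ++ [u]) from rfl,
        labelsL_append, labelsL_single] at hL
    obtain ⟨Lu, hLu, rfl⟩ := snoc_split hL (labels_ne u (d+1) hu)
    rw [fl_concat_node] at hm
    have hflu : 1 ≤ fl u := by simp [fl, hLu, List.count_append]
    have hm1 : (incList ss m).2 + 1 ≤ fl u := by
      rw [incL_snd]; omega
    have ih := commD u (d+1) Lu P LP r ((incList ss m).2) hu hLu hP hPL hr hm1
    rw [show replaceR (addExceptLast (r:ℤ) P) (.node (ss ++ [u]))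
        = .node (replaceRList (addExceptLast (r:ℤ) P) (ss ++ [u])) from rfl,
        replaceRList_concat]
    have e1 : incUpTo (.node (ss ++ [replaceR (addExceptLast (r:ℤ) P) u])) m
        = (.node ((incList (ss ++ [replaceR (addExceptLast (r:ℤ) P) u]) m).1),
           (incList (ss ++ [replaceR (addExceptLast (r:ℤ) P) u]) m).2) := rfl
    rw [e1, incList_append]
    have e2 : incList [replaceR (addExceptLast (r:ℤ) P) u] ((incList ss m).2)
        = ([(incUpTo (replaceR (addExceptLast (r:ℤ) P) u) ((incList ss m).2)).1],
           (incUpTo (replaceR (addExceptLast (r:ℤ) P) u) ((incList ss m).2)).2) := by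
      simp [incList]
    rw [e2, ih]
    have e3 : incUpTo (.node (ss ++ [u])) m
        = (.node ((incList (ss ++ [u]) m).1), (incList (ss ++ [u]) m).2) := rfl
    rw [e3, incList_append]
    have e4 : incList [u] ((incList ss m).2)
        = ([(incUpTo u ((incList ss m).2)).1], (incUpTo u ((incList ss m).2)).2) := by
      simp [incList]
    rw [e4]
    rw [show replaceR (addExceptLast ((r:ℤ)+1) P)
          (.node ((incList ss m).1 ++ [(incUpTo u ((incList ss m).2)).1]))
        = .node (replaceRList (addExceptLast ((r:ℤ)+1) P)
            ((incList ss m).1 ++ [(incUpTo u ((incList ss m).2)).1])) from rfl,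
        replaceRList_concat]
termination_by t d L P LP r m => sizeOf t
decreasing_by subst_vars; exact sizeOf_last_lt _ _

lemma fl_replace {t : DTree} {d : ℕ} {L : List ℤ} {P : DTree} {LP : List ℤ} {r : ℕ}
    (hd : DecoAt t d) (hL : leafLabels t = L ++ [-1]) (hP : IsDeco P)
    (hPL : leafLabels P = LP ++ [-1]) (hr : 1 ≤ r) :
    fl (replaceR (addExceptLast (r:ℤ) P) t) = fl t := by
  have hPge : ∀ x ∈ LP, -1 ≤ x := fun x hx =>
    deco_labels_ge P 0 hP x (by rw [hPL]; exact List.mem_append_left _ hx)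
  rw [fl, labels_replaceR _ t d L (-1) hd hL, labels_AEL (r:ℤ) P 0 LP (-1) hP hPL]
  rw [fl, hL]
  simp [List.count_append, count_neg_map hPge hr]

/-! ### Section 8: HT basic facts and statistics preservation -/

lemma deltaT_eq (t : DTree) (i : ℕ) :
    deltaT t i = .node [(incUpTo t (fl t - i)).1] := rfl

lemma labels_node_single (c : DTree) : leafLabels (.node [c]) = leafLabels c := by
  rw [show leafLabels (.node [c]) = leafLabelsList [c] from rfl, labelsL_single]

lemma labels_deltaT (t : DTree) (i : ℕ) :
    leafLabels (deltaT t i) = leafLabels ((incUpTo t (fl t - i)).1) := by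
  rw [deltaT_eq, labels_node_single]

lemma rpath_deltaT (t : DTree) (i : ℕ) : rpath (deltaT t i) = rpath t + 1 := by
  rw [deltaT_eq]
  rw [show rpath (.node [(incUpTo t (fl t - i)).1]) = rpathLast [(incUpTo t (fl t - i)).1] from rfl]
  rw [show rpathLast [(incUpTo t (fl t - i)).1] = rpath ((incUpTo t (fl t - i)).1) + 1 from rfl]
  rw [rpath_inc]

lemma nverts_deltaT (t : DTree) (i : ℕ) : nverts (deltaT t i) = nverts t + 1 := by
  rw [deltaT_eq]
  rw [show nverts (.node [(incUpTo t (fl t - i)).1])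
      = 1 + (nverts ((incUpTo t (fl t - i)).1) + 0) from rfl]
  rw [nverts_inc]
  omega

lemma fl_deltaT {t : DTree} {i : ℕ} (hge : ∀ x ∈ leafLabels t, -1 ≤ x) (hi : i ≤ fl t) :
    fl (deltaT t i) = i := by
  rw [deltaT_eq]
  have : fl (.node [(incUpTo t (fl t - i)).1]) = fl ((incUpTo t (fl t - i)).1) := by
    rw [fl, labels_node_single]; rfl
  rw [this, fl_inc t _ hge]
  omega

lemma fl_attachR {t : DTree} {i : ℕ} (h1 : 1 ≤ i) (h2 : i ≤ rpath t) :
    fl (attachR t i) = fl t + 1 := by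
  rw [fl, labels_attachR t i h1 h2, List.count_append, fl]
  simp

lemma oplus_node (T1 : DTree) (i : ℕ) (b : List DTree) :
    oplusT T1 i (.node b) = .node ((incUpTo T1 (fl T1 - i)).1 :: b) := rfl

lemma fl_node_cons (c : DTree) (b : List DTree) :
    fl (.node (c :: b)) = fl c + fl (.node b) := by
  rw [fl, fl, fl, show leafLabels (.node (c :: b)) = leafLabels c ++ leafLabelsList b from rfl]
  rw [show leafLabels (.node b) = leafLabelsList b from rfl, List.count_append]

lemma rpath_node_cons (c : DTree) (b : List DTree) (h : b ≠ []) :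
    rpath (.node (c :: b)) = rpath (.node b) := by
  rw [show rpath (.node (c :: b)) = rpathLast (c :: b) from rfl, rpathLast_cons c b h]
  rfl

lemma nverts_node_cons (c : DTree) (b : List DTree) :
    nverts (.node (c :: b)) = nverts c + nverts (.node b) := by
  rw [show nverts (.node (c :: b)) = 1 + (nverts c + nvertsList b) from rfl,
      show nverts (.node b) = 1 + nvertsList b from rfl]
  omega

mutual
theorem mem_labels_attachR : ∀ (t : DTree) (i : ℕ) (x : ℤ),
    x ∈ leafLabels (attachR t i) → x ∈ leafLabels t ∨ x = -1
  | .leaf l, i, x => fun hx => by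
    simp [attachR, leafLabels] at hx
    exact Or.inr hx
  | .node ts, i, x => fun hx => by
    by_cases hi : i ≤ 1
    · rw [show attachR (.node ts) i = .node (ts ++ [.leaf (-1)]) from by simp [attachR, hi],
          show leafLabels (.node (ts ++ [.leaf (-1)])) = leafLabelsList (ts ++ [.leaf (-1)]) from rfl,
          labelsL_append, List.mem_append] at hx
      rcases hx with h | h
      · exact Or.inl h
      · right; simpa [leafLabelsList, leafLabels] using h
    · rw [show attachR (.node ts) i = .node (attachRLast ts (i-1)) from by simp [attachR, hi]] at hx
      exact mem_labels_attachRLast ts (i-1) x hx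
theorem mem_labels_attachRLast : ∀ (ts : List DTree) (i : ℕ) (x : ℤ),
    x ∈ leafLabelsList (attachRLast ts i) → x ∈ leafLabelsList ts ∨ x = -1
  | [], i, x => fun hx => by simp [attachRLast, leafLabelsList] at hx
  | [t], i, x => fun hx => by
    rw [show attachRLast [t] i = [attachR t i] from rfl, labelsL_single] at hx
    rcases mem_labels_attachR t i x hx with h | h
    · exact Or.inl (by rw [labelsL_single]; exact h)
    · exact Or.inr h
  | t :: t' :: ts, i, x => fun hx => by
    rw [show attachRLast (t :: t' :: ts) i = t :: attachRLast (t' :: ts) i from rfl,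
        labelsL_cons, List.mem_append] at hx
    rcases hx with h | h
    · exact Or.inl (by rw [labelsL_cons, List.mem_append]; exact Or.inl h)
    · rcases mem_labels_attachRLast (t' :: ts) i x h with h2 | h2
      · exact Or.inl (by rw [labelsL_cons, List.mem_append]; exact Or.inr h2)
      · exact Or.inr h2
end

mutual
theorem mem_labels_growR : ∀ (t : DTree) (x : ℤ),
    x ∈ leafLabels (growR t) → x ∈ leafLabels t ∨ x = -1
  | .leaf l, x => fun hx => by
    rw [show growR (.leaf l) = .node [.leaf (-1)] from rfl, labels_node_single] at hx
    right; simpa [leafLabels] using hx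
  | .node ts, x => fun hx => by
    rw [show growR (.node ts) = .node (growRLast ts) from rfl] at hx
    exact mem_labels_growRLast ts x hx
theorem mem_labels_growRLast : ∀ (ts : List DTree) (x : ℤ),
    x ∈ leafLabelsList (growRLast ts) → x ∈ leafLabelsList ts ∨ x = -1
  | [], x => fun hx => by simp [growRLast, leafLabelsList] at hx
  | [t], x => fun hx => by
    rw [show growRLast [t] = [growR t] from rfl, labelsL_single] at hx
    rcases mem_labels_growR t x hx with h | h
    · exact Or.inl (by rw [labelsL_single]; exact h)
    · exact Or.inr h
  | t :: t' :: ts, x => fun hx => by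
    rw [show growRLast (t :: t' :: ts) = t :: growRLast (t' :: ts) from rfl,
        labelsL_cons, List.mem_append] at hx
    rcases hx with h | h
    · exact Or.inl (by rw [labelsL_cons, List.mem_append]; exact Or.inl h)
    · rcases mem_labels_growRLast (t' :: ts) x h with h2 | h2
      · exact Or.inl (by rw [labelsL_cons, List.mem_append]; exact Or.inr h2)
      · exact Or.inr h2
end

mutual
theorem mem_labels_replaceR : ∀ (X t : DTree) (x : ℤ),
    x ∈ leafLabels (replaceR X t) → x ∈ leafLabels t ∨ x ∈ leafLabels X
  | X, .leaf l, x => fun hx => Or.inr hx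
  | X, .node ts, x => fun hx => by
    rw [show replaceR X (.node ts) = .node (replaceRList X ts) from rfl] at hx
    exact mem_labels_replaceRList X ts x hx
theorem mem_labels_replaceRList : ∀ (X : DTree) (ts : List DTree) (x : ℤ),
    x ∈ leafLabelsList (replaceRList X ts) → x ∈ leafLabelsList ts ∨ x ∈ leafLabels X
  | X, [], x => fun hx => by simp [replaceRList, leafLabelsList] at hx
  | X, [t], x => fun hx => by
    rw [show replaceRList X [t] = [replaceR X t] from rfl, labelsL_single] at hx
    rcases mem_labels_replaceR X t x hx with h | h
    · exact Or.inl (by rw [labelsL_single]; exact h)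
    · exact Or.inr h
  | X, t :: t' :: ts, x => fun hx => by
    rw [show replaceRList X (t :: t' :: ts) = t :: replaceRList X (t' :: ts) from rfl,
        labelsL_cons, List.mem_append] at hx
    rcases hx with h | h
    · exact Or.inl (by rw [labelsL_cons, List.mem_append]; exact Or.inl h)
    · rcases mem_labels_replaceRList X (t' :: ts) x h with h2 | h2
      · exact Or.inl (by rw [labelsL_cons, List.mem_append]; exact Or.inr h2)
      · exact Or.inr h2
end

mutual
theorem mem_labels_AEL : ∀ (r : ℤ) (t : DTree) (x : ℤ),
    x ∈ leafLabels (addExceptLast r t) → x ∈ leafLabels t ∨ ∃ y ∈ leafLabels t, x = y + r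
  | r, .leaf l, x => fun hx => Or.inl hx
  | r, .node ts, x => fun hx => by
    rw [show addExceptLast r (.node ts) = .node (addExceptLastList r ts) from rfl] at hx
    exact mem_labels_AELList r ts x hx
theorem mem_labels_AELList : ∀ (r : ℤ) (ts : List DTree) (x : ℤ),
    x ∈ leafLabelsList (addExceptLastList r ts) →
      x ∈ leafLabelsList ts ∨ ∃ y ∈ leafLabelsList ts, x = y + r
  | r, [], x => fun hx => by simp [addExceptLastList, leafLabelsList] at hx
  | r, [t], x => fun hx => by
    rw [show addExceptLastList r [t] = [addExceptLast r t] from rfl, labelsL_single] at hx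
    rcases mem_labels_AEL r t x hx with h | ⟨y, hy, hxy⟩
    · exact Or.inl (by rw [labelsL_single]; exact h)
    · exact Or.inr ⟨y, by rw [labelsL_single]; exact hy, hxy⟩
  | r, t :: t' :: ts, x => fun hx => by
    rw [show addExceptLastList r (t :: t' :: ts)
        = addAll r t :: addExceptLastList r (t' :: ts) from rfl,
        labelsL_cons, List.mem_append] at hx
    rcases hx with h | h
    · rw [labels_addAll, List.mem_map] at h
      obtain ⟨y, hy, rfl⟩ := h
      exact Or.inr ⟨y, by rw [labelsL_cons, List.mem_append]; exact Or.inl hy, rfl⟩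
    · rcases mem_labels_AELList r (t' :: ts) x h with h2 | ⟨y, hy, hxy⟩
      · exact Or.inl (by rw [labelsL_cons, List.mem_append]; exact Or.inr h2)
      · exact Or.inr ⟨y, by rw [labelsL_cons, List.mem_append]; exact Or.inr hy, hxy⟩
end

theorem ht_shape {T U : DTree} (h : HT T U) :
    (∃ a, T = .node a ∧ a ≠ []) ∧ (∃ b, U = .node b ∧ b ≠ []) := by
  induction h with
  | base => exact ⟨⟨_, rfl, by simp⟩, ⟨_, rfl, by simp⟩⟩
  | @typeII T' U' i h1 h2 h ih =>
    obtain ⟨-, ⟨b, rfl, hbne⟩⟩ := ih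
    refine ⟨⟨_, deltaT_eq _ _, by simp⟩, ?_⟩
    by_cases hi : i ≤ 1
    · exact ⟨_, by rw [show attachR (.node b) i = .node (b ++ [.leaf (-1)]) from by
        simp [attachR, hi]], by simp⟩
    · exact ⟨_, by rw [show attachR (.node b) i = .node (attachRLast b (i-1)) from by
        simp [attachR, hi]], attachRLast_ne_nil b _ hbne⟩
  | typeIII hne h ih =>
    obtain ⟨-, ⟨b, rfl, hbne⟩⟩ := ih
    exact ⟨⟨_, rfl, by simp⟩,
      ⟨_, show growR (.node b) = .node (growRLast b) from rfl, growRLast_ne_nil b hbne⟩⟩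
  | typeIV h1 h2 hA hB ihA ihB =>
    obtain ⟨⟨a2, rfl, ha2⟩, ⟨b2, rfl, hb2⟩⟩ := ihB
    exact ⟨⟨_, oplus_node _ _ _, by simp⟩,
      ⟨_, show replaceR _ (.node b2) = .node (replaceRList _ b2) from rfl,
        replaceRList_ne_nil _ b2 hb2⟩⟩

theorem ht_labels_ge {T U : DTree} (h : HT T U) :
    (∀ x ∈ leafLabels T, -1 ≤ x) ∧ (∀ x ∈ leafLabels U, -1 ≤ x) := by
  induction h with
  | base =>
    constructor <;> (intro x hx; rw [labels_node_single] at hx; simp [leafLabels] at hx; omega)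
  | typeII h1 h2 h ih =>
    constructor
    · intro x hx
      rw [labels_deltaT] at hx
      exact labels_inc_ge _ _ ih.1 x hx
    · intro x hx
      rcases mem_labels_attachR _ _ x hx with h' | h'
      · exact ih.2 x h'
      · omega
  | typeIII hne h ih =>
    constructor
    · intro x hx
      rw [show leafLabels (.node (.leaf (-1) :: _)) = leafLabels (.leaf (-1)) ++ _ from rfl,
          List.mem_append] at hx
      rcases hx with h' | h'
      · simp [leafLabels] at h'; omega
      · exact ih.1 x h'
    · intro x hx
      rcases mem_labels_growR _ x hx with h' | h'
      · exact ih.2 x h'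
      · omega
  | @typeIV T1 T2 U1 U2 i h1 h2 hA hB ihA ihB =>
    obtain ⟨⟨a2, rfl, ha2⟩, -⟩ := ht_shape hB
    constructor
    · intro x hx
      rw [oplus_node, show leafLabels (.node ((incUpTo _ _).1 :: a2))
          = leafLabels (incUpTo _ _).1 ++ leafLabelsList a2 from rfl, List.mem_append] at hx
      rcases hx with h' | h'
      · exact ihA.1 x (by rw [labels_deltaT]; exact h')
      · exact ihB.1 x h'
    · intro x hx
      rcases mem_labels_replaceR _ _ x hx with h' | h'
      · exact ihB.2 x h'
      · rcases mem_labels_AEL _ _ x h' with h'' | ⟨y, hy, rfl⟩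
        · exact ihA.2 x h''
        · have h9 := ihA.2 y hy
          have h10 : (0:ℤ) ≤ ((rpath U2 : ℕ) : ℤ) := Int.natCast_nonneg _
          omega

lemma isDeco_base : IsDeco (.node [.leaf (-1)]) := by
  refine DecoAt.node (by simp) (fun h => absurd h (by omega)) ?_ ?_
  · intro t' ht' a b heq x hx
    simp at ht'
    subst ht'
    exact h3_single_neg 0 a b heq x hx
  · intro t' ht'
    simp at ht'
    subst ht'
    exact DecoAt.leaf (by omega) (by norm_num)

lemma fl_base : fl (.node [.leaf (-1)]) = 1 := by
  rw [fl, labels_node_single]; simp [leafLabels]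

lemma rpath_base : rpath (.node [.leaf (-1)]) = 1 := rfl

lemma nverts_base : nverts (.node [.leaf (-1)]) = 2 := rfl

theorem ht_main1 {T U : DTree} (h : HT T U) :
    IsDeco T → IsDeco U ∧ fl U = rpath T ∧ rpath U = fl T ∧ nverts U = nverts T := by
  induction h with
  | base => exact fun _ => ⟨isDeco_base, by rw [fl_base]; rfl, by rw [fl_base]; rfl, rfl⟩
  | @typeII T' U' i h1 h2 h ih =>
    intro hT
    have hTge := (ht_labels_ge h).1
    obtain ⟨as, hT'eq, hasne⟩ := (ht_shape h).1
    have hc : DecoAt ((incUpTo T' (fl T' - i)).1) 1 := by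
      rw [deltaT_eq] at hT
      exact deco_h4 hT _ (by simp)
    have hcnode : ∃ cs, (incUpTo T' (fl T' - i)).1 = .node cs := by
      rw [hT'eq]
      exact ⟨_, rfl⟩
    have hT' : IsDeco T' := by
      have hdec := deco_dec _ 0 hc (Or.inr hcnode)
      rwa [dec_inc T' _ hTge] at hdec
    obtain ⟨hU', hflU', hrpU', hnvU'⟩ := ih hT'
    have hirp : i ≤ rpath U' := by rw [hrpU']; exact h2
    refine ⟨deco_attachR U' 0 i hU' h1 hirp, ?_, ?_, ?_⟩
    · rw [fl_attachR h1 hirp, rpath_deltaT, hflU']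
    · rw [rpath_attachR U' i h1 hirp, fl_deltaT hTge h2]
    · rw [nverts_attachR U' i h1 hirp, nverts_deltaT, hnvU']
  | @typeIII ts U'' hne h ih =>
    intro hT
    obtain ⟨hU'', hflU'', hrpU'', hnvU''⟩ := ih (deco_drop_left hT hne)
    obtain ⟨L, hL⟩ := deco_last hU''
    refine ⟨deco_growR U'' 0 hU'', ?_, ?_, ?_⟩
    · rw [fl_growR hU'' hL, hflU'', rpath_node_cons _ _ hne]
    · rw [rpath_growR U'' 0 hU'', hrpU'', fl_node_cons]
      have : fl (DTree.leaf (-1)) = 1 := by simp [fl, leafLabels]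
      omega
    · rw [nverts_growR U'' 0 hU'', hnvU'', nverts_node_cons]
      have : nverts (DTree.leaf (-1)) = 1 := rfl
      omega
  | @typeIV T1 T2 U1 U2 i h1 h2 hA hB ihA ihB =>
    intro hT
    obtain ⟨⟨b, hT2eq, hbne⟩, -⟩ := ht_shape hB
    subst hT2eq
    rw [oplus_node] at hT ⊢
    have hdD : IsDeco (deltaT T1 i) := by rw [deltaT_eq]; exact deco_first hT
    obtain ⟨hU1, hflU1, hrpU1, hnvU1⟩ := ihA hdD
    obtain ⟨hU2, hflU2, hrpU2, hnvU2⟩ := ihB (deco_drop_left hT hbne)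
    obtain ⟨L2, hL2⟩ := deco_last hU2
    obtain ⟨L1, hL1⟩ := deco_last hU1
    obtain ⟨-, ⟨us2, hU2eq, hus2⟩⟩ := ht_shape hB
    have hr1 : 1 ≤ rpath U2 := by rw [hU2eq]; exact rpath_pos us2 hus2
    refine ⟨?_, ?_, ?_, ?_⟩
    · exact deco_replace U2 0 U1 L1 (rpath U2) hU2 ⟨L2, hL2⟩ hU1 hL1 (by omega)
    · rw [fl_replace hU2 hL2 hU1 hL1 hr1, hflU2, rpath_node_cons _ _ hbne]
    · rw [rpath_replaceR _ U2 0 hU2, rpath_AEL, hrpU1, hrpU2, fl_node_cons]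
      have h7 : fl (deltaT T1 i) = fl ((incUpTo T1 (fl T1 - i)).1) := by
        rw [deltaT_eq, fl, labels_node_single]; rfl
      omega
    · have h5 := nverts_replaceR (addExceptLast ((rpath U2 : ℕ):ℤ) U1) U2 0 hU2
      rw [nverts_AEL] at h5
      rw [nverts_node_cons]
      have h6 : nverts (deltaT T1 i) = nverts ((incUpTo T1 (fl T1 - i)).1) + 1 := by
        rw [deltaT_eq]
        rw [show nverts (.node [(incUpTo T1 (fl T1 - i)).1])
            = 1 + (nverts ((incUpTo T1 (fl T1 - i)).1) + 0) from rfl]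
        omega
      omega

/-! ### Section 9: the three HT-level commutation lemmas -/

lemma deco_deltaT_inv {T' : DTree} {i : ℕ} (hT : IsDeco (deltaT T' i))
    (hge : ∀ x ∈ leafLabels T', -1 ≤ x) (hnode : ∃ as, T' = .node as) : IsDeco T' := by
  have hc : DecoAt ((incUpTo T' (fl T' - i)).1) 1 := by
    rw [deltaT_eq] at hT
    exact deco_h4 hT _ (by simp)
  have hcnode : ∃ cs, (incUpTo T' (fl T' - i)).1 = .node cs := by
    obtain ⟨as, rfl⟩ := hnode
    exact ⟨_, rfl⟩
  have hdec := deco_dec _ 0 hc (Or.inr hcnode)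
  rwa [dec_inc T' _ hge] at hdec

lemma attachR_node_shape (ts : List DTree) (i : ℕ) (h : ts ≠ []) :
    ∃ cs, attachR (.node ts) i = .node cs ∧ cs ≠ [] := by
  by_cases hi : i ≤ 1
  · exact ⟨ts ++ [.leaf (-1)], by simp [attachR, hi], by simp⟩
  · exact ⟨attachRLast ts (i-1), by simp [attachR, hi], attachRLast_ne_nil ts _ h⟩

lemma oplus_attachR (Q : DTree) (j k : ℕ) (ss : List DTree) (hss : ss ≠ []) (hk : 1 ≤ k) :
    attachR (oplusT Q j (.node ss)) k = oplusT Q j (attachR (.node ss) k) := by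
  by_cases hk1 : k ≤ 1
  · rw [show k = 1 from by omega, oplus_node, attachR_one, attachR_one, oplus_node]
    simp
  · rw [oplus_node, attachR_ge2 _ _ (by omega), attachR_ge2 _ _ (by omega),
        attachRLast_cons _ _ _ hss, oplus_node]

lemma oplus_growR (Q : DTree) (j : ℕ) (ss : List DTree) (hss : ss ≠ []) :
    growR (oplusT Q j (.node ss)) = oplusT Q j (growR (.node ss)) := by
  rw [oplus_node, show growR (.node ((incUpTo Q (fl Q - j)).1 :: ss))
      = .node (growRLast ((incUpTo Q (fl Q - j)).1 :: ss)) from rfl,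
      growRLast_cons _ _ hss,
      show growR (.node ss) = .node (growRLast ss) from rfl, oplus_node]

lemma oplus_replaceR (X Q : DTree) (j : ℕ) (ss : List DTree) (hss : ss ≠ []) :
    replaceR X (oplusT Q j (.node ss)) = oplusT Q j (replaceR X (.node ss)) := by
  rw [oplus_node, show replaceR X (.node ((incUpTo Q (fl Q - j)).1 :: ss))
      = .node (replaceRList X ((incUpTo Q (fl Q - j)).1 :: ss)) from rfl,
      replaceRList_cons _ _ _ hss,
      show replaceR X (.node ss) = .node (replaceRList X ss) from rfl, oplus_node]

lemma rpath_oplus (Q : DTree) (j : ℕ) (ss : List DTree) (hss : ss ≠ []) :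
    rpath (oplusT Q j (.node ss)) = rpath (.node ss) := by
  rw [oplus_node, rpath_node_cons _ _ hss]

lemma base_eq_deltaT : deltaT (.node [.leaf (-1)]) 1 = .node [.node [.leaf (-1)]] := by
  rw [deltaT_eq, fl_base]
  rfl

lemma base_attachR : attachR (.node [.leaf (-1)]) 1 = .node [.leaf (-1), .leaf (-1)] := by
  rw [attachR_one]
  rfl

/-- the image of `attachR T i` under h is `deltaT U i`. -/
theorem ht_attach {A B : DTree} (h : HT A B) :
    IsDeco A → ∀ i, 1 ≤ i → i ≤ rpath A → HT (attachR A i) (deltaT B i) := by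
  induction h with
  | base =>
    intro _ i h1 h2
    have hi : i = 1 := by
      have e : rpath (DTree.node [DTree.leaf (-1)]) = 1 := rfl
      omega
    subst hi
    rw [base_attachR, base_eq_deltaT]
    have hh := HT.typeIII (ts := [.leaf (-1)]) (by simp) HT.base
    exact hh
  | @typeII A' B' j hj1 hj2 h' ih =>
    intro hA i hi1 hi2
    have hA'ge := (ht_labels_ge h').1
    have hA' : IsDeco A' := deco_deltaT_inv hA hA'ge ⟨_, ((ht_shape h').1).choose_spec.1⟩
    obtain ⟨hB'deco, hflB', hrpB', -⟩ := ht_main1 h' hA'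
    have hrpA : rpath (deltaT A' j) = rpath A' + 1 := rpath_deltaT A' j
    by_cases hione : i = 1
    · subst hione
      have e1 : attachR (deltaT A' j) 1 = oplusT A' j (.node [.leaf (-1)]) := by
        rw [deltaT_eq, attachR_one, oplus_node]
        rfl
      rw [e1]
      have h4 := HT.typeIV hj1 hj2 (HT.typeII hj1 hj2 h') HT.base
      have hBdeco := (ht_main1 (HT.typeII hj1 hj2 h') hA).1
      obtain ⟨LB, hLB⟩ := deco_last hBdeco
      have e2 : replaceR (addExceptLast ((rpath (DTree.node [DTree.leaf (-1)]) : ℕ) : ℤ)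
            (attachR B' j)) (.node [.leaf (-1)])
          = deltaT (attachR B' j) 1 := by
        have ec : ((rpath (DTree.node [DTree.leaf (-1)]) : ℕ) : ℤ) = 1 := by
          rw [rpath_base]; norm_num
        rw [ec, deltaT_eq, commB _ 0 LB hBdeco hLB]
        rfl
      rw [← e2]
      exact h4
    · have hk1 : 1 ≤ i - 1 := by omega
      have hk2 : i - 1 ≤ rpath A' := by omega
      have ihres := ih hA' (i-1) hk1 hk2
      have step := HT.typeII (i := j+1) (by omega)
        (by rw [fl_attachR hk1 hk2]; omega) ihres
      have eL : attachR (deltaT A' j) i = deltaT (attachR A' (i-1)) (j+1) := by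
        rw [deltaT_eq A', attachR_ge2 _ _ (by omega),
            show attachRLast [(incUpTo A' (fl A' - j)).1] (i-1)
              = [attachR ((incUpTo A' (fl A' - j)).1) (i-1)] from rfl,
            deltaT_eq (attachR A' (i-1)), fl_attachR hk1 hk2,
            show fl A' + 1 - (j + 1) = fl A' - j from by omega,
            commA A' (i-1) (fl A' - j) hk1 hk2 (by omega)]
      have hjrp : j ≤ rpath B' := by rw [hrpB']; exact hj2
      have eR : attachR (deltaT B' (i-1)) (j+1) = deltaT (attachR B' j) i := by
        rw [deltaT_eq B', attachR_ge2 _ _ (by omega),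
            show j + 1 - 1 = j from by omega,
            show attachRLast [(incUpTo B' (fl B' - (i-1))).1] j
              = [attachR ((incUpTo B' (fl B' - (i-1))).1) j] from rfl,
            deltaT_eq (attachR B' j), fl_attachR hj1 hjrp,
            show fl B' + 1 - i = fl B' - (i - 1) from by omega,
            commA B' j (fl B' - (i-1)) hj1 hjrp (by omega)]
      rw [eL, ← eR]
      exact step
  | @typeIII ts B'' hne h'' ih =>
    intro hA i h1 h2
    have hts : IsDeco (.node ts) := deco_drop_left hA hne
    obtain ⟨hBdeco, hflB'', hrpB'', -⟩ := ht_main1 h'' hts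
    obtain ⟨LB, hLB⟩ := deco_last hBdeco
    have hrpA : rpath (.node (.leaf (-1) :: ts)) = rpath (.node ts) := rpath_node_cons _ _ hne
    have ihres := ih hts i h1 (by omega)
    obtain ⟨cs, hcs, hcsne⟩ := attachR_node_shape ts i hne
    rw [hcs] at ihres
    have step := HT.typeIII hcsne ihres
    have eA : attachR (.node (.leaf (-1) :: ts)) i
        = .node (.leaf (-1) :: cs) := by
      rw [attachR_cons _ _ _ hne h1, hcs, kids_node]
    have hflpos : 1 ≤ fl B'' := by
      rw [hflB'']
      exact rpath_pos ts hne
    have eG : growR (deltaT B'' i) = deltaT (growR B'') i := by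
      rw [deltaT_eq B'',
          show growR (.node [(incUpTo B'' (fl B'' - i)).1])
            = .node [growR ((incUpTo B'' (fl B'' - i)).1)] from rfl,
          deltaT_eq (growR B''), fl_growR hBdeco hLB,
          commC B'' 0 LB (fl B'' - i) hBdeco hLB (by omega)]
    rw [eA, ← eG]
    exact step
  | @typeIV A1 A2 U1 U2 j hj1 hj2 hA' hB' ihA ihB =>
    intro hA i h1 h2
    obtain ⟨⟨bs, hA2eq, hbsne⟩, ⟨us2, hU2eq, hus2⟩⟩ := ht_shape hB'
    subst hA2eq
    rw [oplus_node] at hA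
    have hA2deco : IsDeco (.node bs) := deco_drop_left hA hbsne
    have hdD : IsDeco (deltaT A1 j) := by rw [deltaT_eq]; exact deco_first hA
    obtain ⟨hU1deco, -, -, -⟩ := ht_main1 hA' hdD
    obtain ⟨hU2deco, hflU2, hrpU2, -⟩ := ht_main1 hB' hA2deco
    obtain ⟨L1, hL1⟩ := deco_last hU1deco
    obtain ⟨L2, hL2⟩ := deco_last hU2deco
    have hr1 : 1 ≤ rpath U2 := by rw [hU2eq]; exact rpath_pos us2 hus2
    have hrpA : rpath (oplusT A1 j (.node bs)) = rpath (.node bs) := rpath_oplus _ _ _ hbsne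
    have ihres := ihB hA2deco i h1 (by omega)
    have step := HT.typeIV hj1 hj2 hA' ihres
    have eA : attachR (oplusT A1 j (.node bs)) i = oplusT A1 j (attachR (.node bs) i) :=
      oplus_attachR A1 j i bs hbsne h1
    have eR : replaceR (addExceptLast ((rpath (deltaT U2 i) : ℕ) : ℤ) U1) (deltaT U2 i)
        = deltaT (replaceR (addExceptLast ((rpath U2 : ℕ) : ℤ) U1) U2) i := by
      have hflU2pos : 1 ≤ fl U2 := fl_pos hU2deco
      have hflrep : fl (replaceR (addExceptLast ((rpath U2 : ℕ) : ℤ) U1) U2) = fl U2 :=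
        fl_replace hU2deco hL2 hU1deco hL1 hr1
      rw [rpath_deltaT, deltaT_eq U2, deltaT_eq, hflrep,
          show replaceR (addExceptLast ((rpath U2 + 1 : ℕ) : ℤ) U1)
              (.node [(incUpTo U2 (fl U2 - i)).1])
            = .node [replaceR (addExceptLast ((rpath U2 + 1 : ℕ) : ℤ) U1)
                ((incUpTo U2 (fl U2 - i)).1)] from rfl,
          commD U2 0 L2 U1 L1 (rpath U2) (fl U2 - i) hU2deco hL2 hU1deco hL1 hr1 (by omega)]
      have ec : ((rpath U2 + 1 : ℕ) : ℤ) = ((rpath U2 : ℕ) : ℤ) + 1 := by push_cast; ring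
      rw [ec]
    rw [eA, ← eR]
    exact step

/-- the image of `growR B` under h prepends a free leaf to the root of the image. -/
theorem ht_grow {B A : DTree} (h : HT B A) :
    IsDeco B → HT (growR B) (.node (.leaf (-1) :: kids A)) := by
  induction h with
  | base =>
    intro _
    have step := HT.typeII (i := 1) le_rfl (by rw [fl_base]) HT.base
    rw [base_eq_deltaT, base_attachR] at step
    exact step
  | @typeII B1 A1 j hj1 hj2 h' ih =>
    intro hB
    have hB1ge := (ht_labels_ge h').1
    have hB1 : IsDeco B1 := deco_deltaT_inv hB hB1ge ⟨_, ((ht_shape h').1).choose_spec.1⟩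
    obtain ⟨hA1deco, -, -, -⟩ := ht_main1 h' hB1
    obtain ⟨-, ⟨as1, hA1eq, has1⟩⟩ := ht_shape h'
    subst hA1eq
    obtain ⟨LB1, hLB1⟩ := deco_last hB1
    have hflpos : 1 ≤ fl B1 := fl_pos hB1
    have eG : growR (deltaT B1 j) = deltaT (growR B1) j := by
      rw [deltaT_eq B1,
          show growR (.node [(incUpTo B1 (fl B1 - j)).1])
            = .node [growR ((incUpTo B1 (fl B1 - j)).1)] from rfl,
          deltaT_eq (growR B1), fl_growR hB1 hLB1,
          commC B1 0 LB1 (fl B1 - j) hB1 hLB1 (by omega)]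
    have ihres := ih hB1
    have step := HT.typeII (i := j) hj1 (by rw [fl_growR hB1 hLB1]; exact hj2) ihres
    have eA : attachR (.node (.leaf (-1) :: kids (.node as1))) j
        = .node (.leaf (-1) :: kids (attachR (.node as1) j)) := by
      rw [kids_node]
      exact attachR_cons _ _ _ has1 hj1
    rw [eG, ← eA]
    exact step
  | @typeIII bs A'' hne h'' ih =>
    intro hB
    have hbs : IsDeco (.node bs) := deco_drop_left hB hne
    obtain ⟨-, ⟨as'', hA''eq, has''⟩⟩ := ht_shape h''
    subst hA''eq
    have ihres := ih hbs
    have step := HT.typeIII (ts := growRLast bs) (growRLast_ne_nil bs hne) ihres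
    have eB : growR (.node (.leaf (-1) :: bs)) = .node (.leaf (-1) :: growRLast bs) := by
      rw [growR_cons _ _ hne]
      rfl
    have eA : growR (.node (.leaf (-1) :: kids (.node as''))) 
        = .node (.leaf (-1) :: kids (growR (.node as''))) := by
      rw [kids_node]
      exact growR_cons _ _ has''
    rw [eB, ← eA]
    exact step
  | @typeIV B1 B2 A1' A2' j hj1 hj2 hA' hB' ihA ihB =>
    intro hB
    obtain ⟨⟨bs2, hB2eq, hbs2⟩, ⟨as2, hA2eq, has2⟩⟩ := ht_shape hB'
    subst hB2eq
    subst hA2eq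
    rw [oplus_node] at hB
    have hB2deco : IsDeco (.node bs2) := deco_drop_left hB hbs2
    have ihres := ihB hB2deco
    have step := HT.typeIV hj1 hj2 hA' ihres
    have eB : growR (oplusT B1 j (.node bs2)) = oplusT B1 j (growR (.node bs2)) :=
      oplus_growR _ _ _ hbs2
    have erp : rpath (.node (.leaf (-1) :: kids (.node as2))) = rpath (.node as2) := by
      rw [kids_node]
      exact rpath_node_cons _ _ has2
    have eR : replaceR (addExceptLast ((rpath (.node (.leaf (-1) :: kids (.node as2))) : ℕ) : ℤ)
          A1') (.node (.leaf (-1) :: kids (.node as2)))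
        = .node (.leaf (-1) :: kids (replaceR
            (addExceptLast ((rpath (.node as2) : ℕ) : ℤ) A1') (.node as2))) := by
      rw [erp, kids_node]
      exact replaceR_cons _ _ _ has2
    rw [eB, ← eR]
    exact step

/-- the image of `replaceR (addExceptLast (rpath R) P) R` under h. -/
theorem ht_replace {R S : DTree} (h : HT R S) :
    IsDeco R → ∀ {P Q : DTree} {j : ℕ}, HT P (deltaT Q j) → IsDeco P → 1 ≤ j → j ≤ fl Q →
    HT (replaceR (addExceptLast ((rpath R : ℕ) : ℤ) P) R) (oplusT Q j S) := by
  induction h with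
  | base =>
    intro _ P Q j hPQ hPdeco hj1 hj2
    obtain ⟨LP, hLP⟩ := deco_last hPdeco
    have e1 : replaceR (addExceptLast ((rpath (DTree.node [DTree.leaf (-1)]) : ℕ) : ℤ) P)
        (.node [.leaf (-1)]) = deltaT P 1 := by
      have ec : ((rpath (DTree.node [DTree.leaf (-1)]) : ℕ) : ℤ) = 1 := by
        rw [rpath_base]; norm_num
      rw [ec, deltaT_eq, commB _ 0 LP hPdeco hLP]
      rfl
    have step := HT.typeII (i := 1) le_rfl (fl_pos hPdeco) hPQ
    have e2 : attachR (deltaT Q j) 1 = oplusT Q j (.node [.leaf (-1)]) := by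
      rw [deltaT_eq, attachR_one, oplus_node]
      rfl
    rw [e1, ← e2]
    exact step
  | @typeII R1 S1 k hk1 hk2 h' ih =>
    intro hR P Q j hPQ hPdeco hj1 hj2
    have hR1ge := (ht_labels_ge h').1
    have hR1 : IsDeco R1 := deco_deltaT_inv hR hR1ge ⟨_, ((ht_shape h').1).choose_spec.1⟩
    obtain ⟨⟨rs1, hR1eq, hrs1⟩, ⟨ss1, hS1eq, hss1⟩⟩ := ht_shape h'
    subst hS1eq
    obtain ⟨LR, hLR⟩ := deco_last hR1
    obtain ⟨LP, hLP⟩ := deco_last hPdeco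
    have hρ : 1 ≤ rpath R1 := by rw [hR1eq]; exact rpath_pos rs1 hrs1
    have hflR1 : 1 ≤ fl R1 := fl_pos hR1
    have eL : replaceR (addExceptLast ((rpath (deltaT R1 k) : ℕ) : ℤ) P) (deltaT R1 k)
        = deltaT (replaceR (addExceptLast ((rpath R1 : ℕ) : ℤ) P) R1) k := by
      rw [rpath_deltaT, deltaT_eq R1,
          show replaceR (addExceptLast ((rpath R1 + 1 : ℕ) : ℤ) P)
              (.node [(incUpTo R1 (fl R1 - k)).1])
            = .node [replaceR (addExceptLast ((rpath R1 + 1 : ℕ) : ℤ) P)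
                ((incUpTo R1 (fl R1 - k)).1)] from rfl,
          deltaT_eq (replaceR (addExceptLast ((rpath R1 : ℕ) : ℤ) P) R1),
          fl_replace hR1 hLR hPdeco hLP hρ,
          commD R1 0 LR P LP (rpath R1) (fl R1 - k) hR1 hLR hPdeco hLP hρ (by omega)]
      have ec : ((rpath R1 + 1 : ℕ) : ℤ) = ((rpath R1 : ℕ) : ℤ) + 1 := by push_cast; ring
      rw [ec]
    have ihres := ih hR1 hPQ hPdeco hj1 hj2
    have step := HT.typeII (i := k) hk1
      (by rw [fl_replace hR1 hLR hPdeco hLP hρ]; exact hk2) ihres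
    have eR : attachR (oplusT Q j (.node ss1)) k = oplusT Q j (attachR (.node ss1) k) :=
      oplus_attachR Q j k ss1 hss1 hk1
    rw [eL, ← eR]
    exact step
  | @typeIII rs S'' hne h'' ih =>
    intro hR P Q j hPQ hPdeco hj1 hj2
    have hrs : IsDeco (.node rs) := deco_drop_left hR hne
    obtain ⟨-, ⟨ss'', hS''eq, hss''⟩⟩ := ht_shape h''
    subst hS''eq
    have ihres := ih hrs hPQ hPdeco hj1 hj2
    have step := HT.typeIII
      (ts := replaceRList (addExceptLast ((rpath (.node rs) : ℕ) : ℤ) P) rs)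
      (replaceRList_ne_nil _ _ hne) ihres
    have eL : replaceR (addExceptLast ((rpath (.node (.leaf (-1) :: rs)) : ℕ) : ℤ) P)
          (.node (.leaf (-1) :: rs))
        = .node (.leaf (-1) :: replaceRList (addExceptLast ((rpath (.node rs) : ℕ) : ℤ) P) rs) := by
      rw [rpath_node_cons _ _ hne, replaceR_cons _ _ _ hne]
      rfl
    have eG : growR (oplusT Q j (.node ss'')) = oplusT Q j (growR (.node ss'')) :=
      oplus_growR _ _ _ hss''
    rw [eL, ← eG]
    exact step
  | @typeIV R1 R2 S1 S2 k hk1 hk2 hA' hB' ihA ihB =>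
    intro hR P Q j hPQ hPdeco hj1 hj2
    obtain ⟨⟨rs2, hR2eq, hrs2⟩, ⟨ss2, hS2eq, hss2⟩⟩ := ht_shape hB'
    subst hR2eq
    subst hS2eq
    rw [oplus_node] at hR
    have hR2deco : IsDeco (.node rs2) := deco_drop_left hR hrs2
    have ihres := ihB hR2deco hPQ hPdeco hj1 hj2
    have step := HT.typeIV hk1 hk2 hA' ihres
    have eL : replaceR (addExceptLast ((rpath (oplusT R1 k (.node rs2)) : ℕ) : ℤ) P)
          (oplusT R1 k (.node rs2))
        = oplusT R1 k (replaceR (addExceptLast ((rpath (.node rs2) : ℕ) : ℤ) P)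
            (.node rs2)) := by
      rw [rpath_oplus _ _ _ hrs2]
      exact oplus_replaceR _ _ _ _ hrs2
    have eR : replaceR (addExceptLast ((rpath (oplusT Q j (.node ss2)) : ℕ) : ℤ) S1)
          (oplusT Q j (.node ss2))
        = oplusT Q j (replaceR (addExceptLast ((rpath (.node ss2) : ℕ) : ℤ) S1)
            (.node ss2)) := by
      rw [rpath_oplus _ _ _ hss2]
      exact oplus_replaceR _ _ _ _ hss2
    rw [eL, ← eR]
    exact step

theorem ht_symm {T U : DTree} (h : HT T U) : IsDeco T → HT U T := by
  induction h with
  | base => exact fun _ => HT.base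
  | @typeII T' U' i h1 h2 h ih =>
    intro hT
    have hT'ge := (ht_labels_ge h).1
    have hT' : IsDeco T' := deco_deltaT_inv hT hT'ge ⟨_, ((ht_shape h).1).choose_spec.1⟩
    obtain ⟨hU'deco, hflU', hrpU', -⟩ := ht_main1 h hT'
    exact ht_attach (ih hT') hU'deco i h1 (by rw [hrpU']; exact h2)
  | @typeIII ts U'' hne h ih =>
    intro hT
    have hts := deco_drop_left hT hne
    exact ht_grow (ih hts) (ht_main1 h hts).1
  | @typeIV T1 T2 U1 U2 i h1 h2 hA hB ihA ihB =>
    intro hT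
    obtain ⟨⟨b, hT2eq, hbne⟩, -⟩ := ht_shape hB
    subst hT2eq
    rw [oplus_node] at hT
    have hdD : IsDeco (deltaT T1 i) := by rw [deltaT_eq]; exact deco_first hT
    have hT2 : IsDeco (.node b) := deco_drop_left hT hbne
    exact ht_replace (ihB hT2) (ht_main1 hB hT2).1 (ihA hdD) (ht_main1 hA hdD).1 h1 h2

theorem stmt15 (T U : DTree) (hT : IsDeco T) (h : HT T U) :
    IsDeco U ∧ nedges U = nedges T ∧ HT U T := by
  obtain ⟨hU, -, -, hnv⟩ := ht_main1 h hT
  exact ⟨hU, by rw [nedges, nedges, hnv], ht_symm h hT⟩
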